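/- arXiv:2010.03716 — 4 statements merged into one kernel-verified Lean document; each statement's English description precedes it below -/
import Mathlib

section
/- (Curvature via the Laplacian) Let G = (V,E) be a simple connected graph and let x ≠ y be vertices of G. Then κ_LLY(x,y) = inf { ∇_{xy} Δf : f is 1-Lipschitz with respect to the graph distance and ∇_{yx} f = 1 }, where ∇_{xy} f = (f(x) − f(y))/d(x,y) and Δf(x) = (1/deg(x)) Σ_{v∈Γ(x)} (f(v) − f(x)). -/
open Filter Set

variable {V : Type*}

-- The `α`-lazy random walk distribution at vertex `x`.
open Classical in
noncomputable def lazyWalk (G : SimpleGraph V) [G.LocallyFinite] (α : ℝ) (x : V) : V → ℝ :=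
  fun v => if v = x then α else if G.Adj x v then (1 - α) / (G.degree x : ℝ) else 0

/-- `A` is a coupling between the finitely supported distributions `m₁` and `m₂`. -/
def IsCoupling (m₁ m₂ : V → ℝ) (A : V → V → ℝ) : Prop :=
  (Function.support fun p : V × V => A p.1 p.2).Finite ∧
  (∀ x y, 0 ≤ A x y ∧ A x y ≤ 1) ∧
  (∀ x, ∑ᶠ y, A x y = m₁ x) ∧
  (∀ y, ∑ᶠ x, A x y = m₂ y)

/-- The transportation (Wasserstein) distance between two distributions on `V`,
with respect to the graph distance of `G`. -/
noncomputable def transportDist (G : SimpleGraph V) (m₁ m₂ : V → ℝ) : ℝ :=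
  sInf {w : ℝ | ∃ A : V → V → ℝ, IsCoupling m₁ m₂ A ∧
    w = ∑ᶠ p : V × V, A p.1 p.2 * (G.dist p.1 p.2 : ℝ)}

/-- The `α`-Ricci curvature `κ_α(x,y)`. -/
noncomputable def alphaRicci (G : SimpleGraph V) [G.LocallyFinite] (α : ℝ) (x y : V) : ℝ :=
  1 - transportDist G (lazyWalk G α x) (lazyWalk G α y) / (G.dist x y : ℝ)

/-- `κ` is the Lin–Lu–Yau Ricci curvature of the pair `(x,y)`:
the limit of `κ_α(x,y)/(1-α)` as `α → 1⁻`. -/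
def HasLLYCurv (G : SimpleGraph V) [G.LocallyFinite] (x y : V) (κ : ℝ) : Prop :=
  Tendsto (fun α : ℝ => alphaRicci G α x y / (1 - α)) (nhdsWithin 1 (Set.Iio 1)) (nhds κ)

/-- `G` is positively curved: every edge has positive Lin–Lu–Yau Ricci curvature. -/
def PositivelyCurved (G : SimpleGraph V) [G.LocallyFinite] : Prop :=
  ∀ ⦃x y : V⦄, G.Adj x y → ∃ κ : ℝ, 0 < κ ∧ HasLLYCurv G x y κ

/-- `G` is planar: it admits a topological embedding in the plane, i.e. an injective
placement of the vertices together with arcs for the edges, where arcs are injective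
continuous curves joining the endpoints, not passing through any other vertex, and
two arcs of distinct edges meet only in common endpoints. -/
def IsPlanar (G : SimpleGraph V) : Prop :=
  ∃ (f : V → ℝ × ℝ) (e : ∀ u v : V, G.Adj u v → Set.Icc (0:ℝ) 1 → ℝ × ℝ),
    Function.Injective f ∧
    (∀ u v (h : G.Adj u v), Continuous (e u v h)) ∧
    (∀ u v (h : G.Adj u v), Function.Injective (e u v h)) ∧
    (∀ u v (h : G.Adj u v),
      e u v h ⟨0, Set.left_mem_Icc.mpr zero_le_one⟩ = f u ∧
      e u v h ⟨1, Set.right_mem_Icc.mpr zero_le_one⟩ = f v) ∧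
    (∀ u v (h : G.Adj u v) (w : V), w ≠ u → w ≠ v → f w ∉ Set.range (e u v h)) ∧
    (∀ u v (h : G.Adj u v) (u' v' : V) (h' : G.Adj u' v'), ({u, v} : Set V) ≠ {u', v'} →
      Set.range (e u v h) ∩ Set.range (e u' v' h') ⊆ (f '' {u, v}) ∩ (f '' {u', v'}))

/-- The normalized combinatorial graph Laplacian `Δf(x) = (1/deg x) Σ_{u ~ x} (f u - f x)`. -/
noncomputable def graphLap (G : SimpleGraph V) [G.LocallyFinite] (f : V → ℝ) (w : V) : ℝ :=
  (∑ u ∈ G.neighborFinset w, (f u - f w)) / (G.degree w : ℝ)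

section Hall
open Finset

/-- A transport plan between supplies `a` on `s` and demands `b` on `t`, supported on `R`. -/
abbrev IsTransport {ι : Type*} (s t : Finset ι) (R : ι → ι → Prop) (a b : ι → ℝ)
    (A : ι → ι → ℝ) : Prop :=
  (∀ i j, 0 ≤ A i j) ∧ (∀ i j, A i j ≠ 0 → i ∈ s ∧ j ∈ t ∧ R i j) ∧
  (∀ i ∈ s, ∑ j ∈ t, A i j = a i) ∧ (∀ j ∈ t, ∑ i ∈ s, A i j = b j)

private lemma aux_or {x y : ℝ} (h : x + y ≠ 0) : x ≠ 0 ∨ y ≠ 0 := by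
  by_contra hc; push_neg at hc; rw [hc.1, hc.2, add_zero] at h; exact h rfl

theorem fracHall {ι : Type*} [DecidableEq ι] (N : ℕ) :
    ∀ (s t : Finset ι) (R : ι → ι → Prop) [DecidableRel R], s.card + t.card ≤ N →
    ∀ (a b : ι → ℝ), (∀ i, 0 ≤ a i) → (∀ j, 0 ≤ b j) →
    (∑ i ∈ s, a i = ∑ j ∈ t, b j) →
    (∀ B ⊆ s, ∑ i ∈ B, a i ≤ ∑ j ∈ t.filter (fun j => ∃ i ∈ B, R i j), b j) →
    ∃ A : ι → ι → ℝ, IsTransport s t R a b A := by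
  induction N with
  | zero =>
    intro s t R _ hcard a b ha hb heq hall
    have hs : s = ∅ := card_eq_zero.mp (by omega)
    have ht : t = ∅ := card_eq_zero.mp (by omega)
    subst hs; subst ht
    exact ⟨fun _ _ => 0, fun _ _ => le_refl 0, fun i j h => absurd rfl h,
      fun i hi => absurd hi (notMem_empty i), fun j hj => absurd hj (notMem_empty j)⟩
  | succ N IH =>
    intro s t R instR hcard a b ha hb heq hall
    -- the case of a proper nonempty tight set: split the problem in two
    have key_tight : ∀ (a b : ι → ℝ), (∀ i, 0 ≤ a i) → (∀ j, 0 ≤ b j) →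
        (∑ i ∈ s, a i = ∑ j ∈ t, b j) →
        (∀ B ⊆ s, ∑ i ∈ B, a i ≤ ∑ j ∈ t.filter (fun j => ∃ i ∈ B, R i j), b j) →
        ∀ T, T ⊆ s → T.Nonempty → T ≠ s →
        (∑ i ∈ T, a i = ∑ j ∈ t.filter (fun j => ∃ i ∈ T, R i j), b j) →
        ∃ A : ι → ι → ℝ, IsTransport s t R a b A := by
      intro a b ha hb heq hall T hTs hTne hTne'
      set NT := t.filter (fun j => ∃ i ∈ T, R i j) with hNT
      intro htight
      have hNTt : NT ⊆ t := filter_subset _ _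
      have hTcard : T.card < s.card := card_lt_card (Finset.ssubset_iff_subset_ne.mpr ⟨hTs, hTne'⟩)
      have hcard1 : T.card + NT.card ≤ N := by
        have := Finset.card_le_card hNTt; omega
      have hcard2 : (s \ T).card + (t \ NT).card ≤ N := by
        have h1 : (s \ T).card = s.card - T.card := card_sdiff_of_subset hTs
        have h2 : (t \ NT).card ≤ t.card := card_le_card (sdiff_subset)
        have h3 : 1 ≤ T.card := card_pos.mpr hTne
        omega
      -- subproblem 1
      have hall1 : ∀ B ⊆ T, ∑ i ∈ B, a i ≤ ∑ j ∈ NT.filter (fun j => ∃ i ∈ B, R i j), b j := by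
        intro B hBT
        have hfe : NT.filter (fun j => ∃ i ∈ B, R i j) = t.filter (fun j => ∃ i ∈ B, R i j) := by
          rw [hNT, filter_filter]
          apply filter_congr
          intro j _
          constructor
          · rintro ⟨_, h⟩; exact h
          · rintro ⟨i, hi, hR⟩; exact ⟨⟨i, hBT hi, hR⟩, ⟨i, hi, hR⟩⟩
        rw [hfe]
        exact hall B (hBT.trans hTs)
      obtain ⟨A₁, hA₁0, hA₁supp, hA₁row, hA₁col⟩ := IH T NT R hcard1 a b ha hb htight hall1
      -- subproblem 2
      have heq2 : ∑ i ∈ s \ T, a i = ∑ j ∈ t \ NT, b j := by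
        rw [sum_sdiff_eq_sub hTs, sum_sdiff_eq_sub hNTt, heq, htight]
      have hall2 : ∀ B ⊆ s \ T,
          ∑ i ∈ B, a i ≤ ∑ j ∈ (t \ NT).filter (fun j => ∃ i ∈ B, R i j), b j := by
        intro B hB
        have hBs : B ⊆ s := hB.trans sdiff_subset
        have hBTs : B ∪ T ⊆ s := union_subset hBs hTs
        have h := hall (B ∪ T) hBTs
        have hsplit : t.filter (fun j => ∃ i ∈ B ∪ T, R i j)
            = NT ∪ (t.filter (fun j => ∃ i ∈ B, R i j)) := by
          ext j
          simp only [hNT, Finset.mem_filter, Finset.mem_union]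
          constructor
          · rintro ⟨hj, i, (h' | h'), hR⟩
            · exact Or.inr ⟨hj, i, h', hR⟩
            · exact Or.inl ⟨hj, i, h', hR⟩
          · rintro (⟨hj, i, hi, hR⟩ | ⟨hj, i, hi, hR⟩)
            · exact ⟨hj, i, Or.inr hi, hR⟩
            · exact ⟨hj, i, Or.inl hi, hR⟩
        have hBsum : ∑ i ∈ B ∪ T, a i = ∑ i ∈ B, a i + ∑ i ∈ T, a i := by
          apply sum_union
          exact disjoint_of_subset_left hB sdiff_disjoint
        have hUsum : ∑ j ∈ NT ∪ (t.filter (fun j => ∃ i ∈ B, R i j)), b j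
            = ∑ j ∈ NT, b j + ∑ j ∈ (t.filter (fun j => ∃ i ∈ B, R i j)) \ NT, b j := by
          rw [← sum_union disjoint_sdiff, union_sdiff_self_eq_union]
        have hfe : (t \ NT).filter (fun j => ∃ i ∈ B, R i j)
            = (t.filter (fun j => ∃ i ∈ B, R i j)) \ NT := by
          ext j; simp only [mem_filter, Finset.mem_sdiff]; tauto
        rw [hfe]
        rw [hsplit, hUsum, hBsum] at h
        linarith [htight]
      obtain ⟨A₂, hA₂0, hA₂supp, hA₂row, hA₂col⟩ :=
        IH (s \ T) (t \ NT) R hcard2 a b ha hb heq2 hall2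
      refine ⟨fun i j => A₁ i j + A₂ i j, fun i j => add_nonneg (hA₁0 i j) (hA₂0 i j), ?_, ?_, ?_⟩
      · intro i j hne
        beta_reduce at hne
        rcases aux_or hne with h | h
        · obtain ⟨h1, h2, h3⟩ := hA₁supp i j h
          exact ⟨hTs h1, hNTt h2, h3⟩
        · obtain ⟨h1, h2, h3⟩ := hA₂supp i j h
          exact ⟨(mem_sdiff.mp h1).1, (mem_sdiff.mp h2).1, h3⟩
      · intro i hi
        beta_reduce
        rw [sum_add_distrib]
        by_cases hiT : i ∈ T
        · have h1 : ∑ j ∈ t, A₁ i j = a i := by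
            rw [← hA₁row i hiT]
            apply (sum_subset hNTt ?_).symm
            intro j _ hj
            by_contra hne
            exact hj (hA₁supp i j hne).2.1
          have h2 : ∑ j ∈ t, A₂ i j = 0 := by
            apply sum_eq_zero
            intro j _
            by_contra hne
            exact (mem_sdiff.mp (hA₂supp i j hne).1).2 hiT
          rw [h1, h2, add_zero]
        · have hiT' : i ∈ s \ T := mem_sdiff.mpr ⟨hi, hiT⟩
          have h2 : ∑ j ∈ t, A₂ i j = a i := by
            rw [← hA₂row i hiT']
            apply (sum_subset sdiff_subset ?_).symm
            intro j _ hj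
            by_contra hne
            exact hj (hA₂supp i j hne).2.1
          have h1 : ∑ j ∈ t, A₁ i j = 0 := by
            apply sum_eq_zero
            intro j _
            by_contra hne
            exact hiT (hA₁supp i j hne).1
          rw [h1, h2, zero_add]
      · intro j hj
        beta_reduce
        rw [sum_add_distrib]
        by_cases hjNT : j ∈ NT
        · have h1 : ∑ i ∈ s, A₁ i j = b j := by
            rw [← hA₁col j hjNT]
            apply (sum_subset hTs ?_).symm
            intro i _ hi
            by_contra hne
            exact hi (hA₁supp i j hne).1
          have h2 : ∑ i ∈ s, A₂ i j = 0 := by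
            apply sum_eq_zero
            intro i _
            by_contra hne
            exact (mem_sdiff.mp (hA₂supp i j hne).2.1).2 hjNT
          rw [h1, h2, add_zero]
        · have hjNT' : j ∈ t \ NT := mem_sdiff.mpr ⟨hj, hjNT⟩
          have h2 : ∑ i ∈ s, A₂ i j = b j := by
            rw [← hA₂col j hjNT']
            apply (sum_subset sdiff_subset ?_).symm
            intro i _ hi
            by_contra hne
            exact hi (hA₂supp i j hne).1
          have h1 : ∑ i ∈ s, A₁ i j = 0 := by
            apply sum_eq_zero
            intro i _
            by_contra hne
            exact hjNT (hA₁supp i j hne).2.1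
          rw [h1, h2, zero_add]
    -- now the main case analysis
    by_cases hs : s = ∅
    · subst hs
      have hb0 : ∀ j ∈ t, b j = 0 := by
        intro j hj
        have h0 : ∑ j ∈ t, b j = 0 := by rw [← heq, sum_empty]
        exact (sum_eq_zero_iff_of_nonneg (fun j _ => hb j)).mp h0 j hj
      exact ⟨fun _ _ => 0, fun _ _ => le_refl 0, fun i j h => absurd rfl h,
        fun i hi => absurd hi (notMem_empty i),
        fun j hj => by rw [sum_const_zero]; exact (hb0 j hj).symm⟩
    · by_cases hza : ∃ i ∈ s, a i = 0
      · obtain ⟨i₀, hi₀s, hi₀⟩ := hza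
        have hcard' : (s.erase i₀).card + t.card ≤ N := by
          have := card_erase_of_mem hi₀s
          have := card_pos.mpr ⟨i₀, hi₀s⟩
          omega
        have heq' : ∑ i ∈ s.erase i₀, a i = ∑ j ∈ t, b j := by
          rw [← heq]
          exact sum_erase _ hi₀
        have hall' : ∀ B ⊆ s.erase i₀,
            ∑ i ∈ B, a i ≤ ∑ j ∈ t.filter (fun j => ∃ i ∈ B, R i j), b j :=
          fun B hB => hall B (hB.trans (erase_subset _ _))
        obtain ⟨A, hA0, hAsupp, hArow, hAcol⟩ :=
          IH (s.erase i₀) t R hcard' a b ha hb heq' hall'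
        refine ⟨A, hA0, ?_, ?_, ?_⟩
        · intro i j hne
          beta_reduce at hne
          obtain ⟨h1, h2, h3⟩ := hAsupp i j hne
          exact ⟨(erase_subset _ _) h1, h2, h3⟩
        · intro i hi
          by_cases hii : i = i₀
          · subst hii
            rw [hi₀]
            apply sum_eq_zero
            intro j _
            by_contra hne
            exact (notMem_erase i s) (hAsupp i j hne).1
          · exact hArow i (mem_erase.mpr ⟨hii, hi⟩)
        · intro j hj
          rw [← hAcol j hj]
          apply (sum_subset (erase_subset _ _) ?_).symm
          intro i _ hi
          by_contra hne
          exact hi (hAsupp i j hne).1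
      · by_cases hzb : ∃ j ∈ t, b j = 0
        · obtain ⟨j₀, hj₀t, hj₀⟩ := hzb
          have hcard' : s.card + (t.erase j₀).card ≤ N := by
            have := card_erase_of_mem hj₀t
            have := card_pos.mpr ⟨j₀, hj₀t⟩
            omega
          have heq' : ∑ i ∈ s, a i = ∑ j ∈ t.erase j₀, b j := by
            rw [heq]
            exact (sum_erase _ hj₀).symm
          have hall' : ∀ B ⊆ s,
              ∑ i ∈ B, a i ≤ ∑ j ∈ (t.erase j₀).filter (fun j => ∃ i ∈ B, R i j), b j := by
            intro B hB
            have hfe : (t.erase j₀).filter (fun j => ∃ i ∈ B, R i j)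
                = (t.filter (fun j => ∃ i ∈ B, R i j)).erase j₀ := by
              ext j; simp only [mem_filter, mem_erase]; tauto
            rw [hfe, sum_erase _ hj₀]
            exact hall B hB
          obtain ⟨A, hA0, hAsupp, hArow, hAcol⟩ :=
            IH s (t.erase j₀) R hcard' a b ha hb heq' hall'
          refine ⟨A, hA0, ?_, ?_, ?_⟩
          · intro i j hne
            beta_reduce at hne
            obtain ⟨h1, h2, h3⟩ := hAsupp i j hne
            exact ⟨h1, (erase_subset _ _) h2, h3⟩
          · intro i hi
            rw [← hArow i hi]
            apply (sum_subset (erase_subset _ _) ?_).symm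
            intro j _ hj
            by_contra hne
            exact hj (hAsupp i j hne).2.1
          · intro j hj
            by_cases hjj : j = j₀
            · subst hjj
              rw [hj₀]
              apply sum_eq_zero
              intro i _
              by_contra hne
              exact (notMem_erase j t) (hAsupp i j hne).2.1
            · exact hAcol j (mem_erase.mpr ⟨hjj, hj⟩)
        · -- all supplies and demands positive
          push_neg at hza hzb
          have hapos : ∀ i ∈ s, 0 < a i := fun i hi => (ha i).lt_of_ne' (hza i hi)
          have hbpos : ∀ j ∈ t, 0 < b j := fun j hj => (hb j).lt_of_ne' (hzb j hj)
          by_cases htight : ∃ T, T ⊆ s ∧ T.Nonempty ∧ T ≠ s ∧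
              (∑ i ∈ T, a i = ∑ j ∈ t.filter (fun j => ∃ i ∈ T, R i j), b j)
          · obtain ⟨T, h1, h2, h3, h4⟩ := htight
            exact key_tight a b ha hb heq hall T h1 h2 h3 h4
          · -- no tight set: ship mass along one saturated edge
            obtain ⟨i₀, hi₀s⟩ := nonempty_iff_ne_empty.mpr hs
            have hai₀ : 0 < a i₀ := hapos i₀ hi₀s
            have h1 := hall {i₀} (singleton_subset_iff.mpr hi₀s)
            rw [sum_singleton] at h1
            have hj₀ : ∃ j₀ ∈ t, R i₀ j₀ ∧ 0 < b j₀ := by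
              have hpos : 0 < ∑ j ∈ t.filter (fun j => ∃ i ∈ ({i₀} : Finset ι), R i j), b j :=
                lt_of_lt_of_le hai₀ h1
              obtain ⟨j₀, hj₀mem, hj₀ne⟩ := exists_ne_zero_of_sum_ne_zero (ne_of_gt hpos)
              obtain ⟨hj₀t, i, hi, hR⟩ := mem_filter.mp hj₀mem
              rw [mem_singleton.mp hi] at hR
              exact ⟨j₀, hj₀t, hR, (hb j₀).lt_of_ne' hj₀ne⟩
            obtain ⟨j₀, hj₀t, hRij, hbj₀⟩ := hj₀
            set 𝒮 : Finset (Finset ι) :=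
              s.powerset.filter (fun B => i₀ ∉ B ∧ ∃ i ∈ B, R i j₀) with h𝒮def
            set slack : Finset ι → ℝ :=
              fun B => (∑ j ∈ t.filter (fun j => ∃ i ∈ B, R i j), b j) - ∑ i ∈ B, a i
              with hslackdef
            have hslackpos : ∀ B ∈ 𝒮, 0 < slack B := by
              intro B hB
              obtain ⟨hBpow, hi₀B, i, hiB, hRB⟩ := mem_filter.mp hB
              have hBs : B ⊆ s := mem_powerset.mp hBpow
              have hge : 0 ≤ slack B := sub_nonneg.mpr (hall B hBs)
              rcases hge.lt_or_eq with h | h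
              · exact h
              · exfalso
                apply htight
                have h2 := h.symm
                rw [hslackdef] at h2
                dsimp only at h2
                refine ⟨B, hBs, ⟨i, hiB⟩, ?_, by linarith⟩
                intro hBs'
                exact hi₀B (hBs' ▸ hi₀s)
            set tm : ℝ := if h𝒮ne : 𝒮.Nonempty
              then min (min (a i₀) (b j₀)) (𝒮.inf' h𝒮ne slack)
              else min (a i₀) (b j₀) with htmdef
            have htmpos : 0 < tm := by
              rw [htmdef]
              split
              · next h𝒮ne =>
                apply lt_min (lt_min hai₀ hbj₀)
                rw [Finset.lt_inf'_iff]
                exact hslackpos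
              · exact lt_min hai₀ hbj₀
            have htm_a : tm ≤ a i₀ := by
              rw [htmdef]; split
              · exact le_trans (min_le_left _ _) (min_le_left _ _)
              · exact min_le_left _ _
            have htm_b : tm ≤ b j₀ := by
              rw [htmdef]; split
              · exact le_trans (min_le_left _ _) (min_le_right _ _)
              · exact min_le_right _ _
            have htm_slack : ∀ B ∈ 𝒮, tm ≤ slack B := by
              intro B hB
              have h𝒮ne : 𝒮.Nonempty := ⟨B, hB⟩
              rw [htmdef, dif_pos h𝒮ne]
              exact le_trans (min_le_right _ _) (Finset.inf'_le _ hB)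
            set a' : ι → ℝ := fun i => if i = i₀ then a i₀ - tm else a i with ha'def
            set b' : ι → ℝ := fun j => if j = j₀ then b j₀ - tm else b j with hb'def
            have ha' : ∀ i, 0 ≤ a' i := by
              intro i; rw [ha'def]; dsimp only; split
              · linarith
              · exact ha i
            have hb' : ∀ j, 0 ≤ b' j := by
              intro j; rw [hb'def]; dsimp only; split
              · linarith
              · exact hb j
            have hsuma' : ∀ B : Finset ι, ∑ i ∈ B, a' i
                = (∑ i ∈ B, a i) - (if i₀ ∈ B then tm else 0) := by
              intro B
              have : ∀ i ∈ B, a' i = a i - (if i = i₀ then tm else 0) := by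
                intro i _; rw [ha'def]; dsimp only; split
                · next h => rw [h]
                · ring
              rw [sum_congr rfl this, sum_sub_distrib, sum_ite_eq' B i₀ (fun _ => tm)]
            have hsumb' : ∀ C : Finset ι, ∑ j ∈ C, b' j
                = (∑ j ∈ C, b j) - (if j₀ ∈ C then tm else 0) := by
              intro C
              have : ∀ j ∈ C, b' j = b j - (if j = j₀ then tm else 0) := by
                intro j _; rw [hb'def]; dsimp only; split
                · next h => rw [h]
                · ring
              rw [sum_congr rfl this, sum_sub_distrib, sum_ite_eq' C j₀ (fun _ => tm)]
            have heq' : ∑ i ∈ s, a' i = ∑ j ∈ t, b' j := by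
              rw [hsuma', hsumb', if_pos hi₀s, if_pos hj₀t, heq]
            have hall' : ∀ B ⊆ s,
                ∑ i ∈ B, a' i ≤ ∑ j ∈ t.filter (fun j => ∃ i ∈ B, R i j), b' j := by
              intro B hB
              rw [hsuma', hsumb']
              by_cases hi₀B : i₀ ∈ B
              · have hj₀NB : j₀ ∈ t.filter (fun j => ∃ i ∈ B, R i j) :=
                  mem_filter.mpr ⟨hj₀t, i₀, hi₀B, hRij⟩
                rw [if_pos hi₀B, if_pos hj₀NB]
                linarith [hall B hB]
              · rw [if_neg hi₀B]
                by_cases hj₀NB : j₀ ∈ t.filter (fun j => ∃ i ∈ B, R i j)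
                · rw [if_pos hj₀NB]
                  have hB𝒮 : B ∈ 𝒮 := by
                    rw [h𝒮def, Finset.mem_filter, Finset.mem_powerset]
                    obtain ⟨_, i, hi, hR⟩ := mem_filter.mp hj₀NB
                    exact ⟨hB, hi₀B, i, hi, hR⟩
                  have := htm_slack B hB𝒮
                  rw [hslackdef] at this
                  dsimp only at this
                  linarith
                · rw [if_neg hj₀NB]
                  linarith [hall B hB]
            -- delta function to add
            set D : ι → ι → ℝ := fun i j => if i = i₀ ∧ j = j₀ then tm else 0 with hDdef
            have hD0 : ∀ i j, 0 ≤ D i j := by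
              intro i j; rw [hDdef]; dsimp only; split
              · exact le_of_lt htmpos
              · exact le_refl 0
            have hDrow : ∀ (C : Finset ι), j₀ ∈ C → ∀ i,
                ∑ j ∈ C, D i j = if i = i₀ then tm else 0 := by
              intro C hj₀C i
              have : ∀ j ∈ C, D i j = if j = j₀ then (if i = i₀ then tm else 0) else 0 := by
                intro j _; rw [hDdef]; dsimp only
                by_cases h1 : j = j₀ <;> by_cases h2 : i = i₀ <;> simp [h1, h2]
              rw [sum_congr rfl this, sum_ite_eq' C j₀ (fun _ => if i = i₀ then tm else 0),
                if_pos hj₀C]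
            have hDcol : ∀ (C : Finset ι), i₀ ∈ C → ∀ j,
                ∑ i ∈ C, D i j = if j = j₀ then tm else 0 := by
              intro C hi₀C j
              have : ∀ i ∈ C, D i j = if i = i₀ then (if j = j₀ then tm else 0) else 0 := by
                intro i _; rw [hDdef]; dsimp only
                by_cases h1 : i = i₀ <;> by_cases h2 : j = j₀ <;> simp [h1, h2]
              rw [sum_congr rfl this, sum_ite_eq' C i₀ (fun _ => if j = j₀ then tm else 0),
                if_pos hi₀C]
            by_cases hta : tm = a i₀
            · -- supply at i₀ exhausted
              have hcard' : (s.erase i₀).card + t.card ≤ N := by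
                have := card_erase_of_mem hi₀s
                have := card_pos.mpr ⟨i₀, hi₀s⟩
                omega
              have ha'i₀ : a' i₀ = 0 := by rw [ha'def]; dsimp only; rw [if_pos rfl, hta]; ring
              have heq'' : ∑ i ∈ s.erase i₀, a' i = ∑ j ∈ t, b' j := by
                rw [← heq', sum_erase _ ha'i₀]
              have hall'' : ∀ B ⊆ s.erase i₀,
                  ∑ i ∈ B, a' i ≤ ∑ j ∈ t.filter (fun j => ∃ i ∈ B, R i j), b' j :=
                fun B hB => hall' B (hB.trans (erase_subset _ _))
              obtain ⟨A, hA0, hAsupp, hArow, hAcol⟩ :=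
                IH (s.erase i₀) t R hcard' a' b' ha' hb' heq'' hall''
              refine ⟨fun i j => A i j + D i j,
                fun i j => add_nonneg (hA0 i j) (hD0 i j), ?_, ?_, ?_⟩
              · intro i j hne
                beta_reduce at hne
                rcases aux_or hne with h | h
                · obtain ⟨h1, h2, h3⟩ := hAsupp i j h
                  exact ⟨(erase_subset _ _) h1, h2, h3⟩
                · rw [hDdef] at h; dsimp only at h
                  by_cases hc : i = i₀ ∧ j = j₀
                  · rw [hc.1, hc.2]; exact ⟨hi₀s, hj₀t, hRij⟩
                  · rw [if_neg hc] at h; exact absurd rfl h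
              · intro i hi
                rw [sum_add_distrib, hDrow t hj₀t i]
                by_cases hii : i = i₀
                · subst hii
                  have h0 : ∑ j ∈ t, A i j = 0 := by
                    apply sum_eq_zero
                    intro j _
                    by_contra hne
                    exact (notMem_erase i s) (hAsupp i j hne).1
                  rw [h0, if_pos rfl, hta, zero_add]
                · rw [if_neg hii, add_zero, hArow i (mem_erase.mpr ⟨hii, hi⟩), ha'def]
                  dsimp only; rw [if_neg hii]
              · intro j hj
                rw [sum_add_distrib, hDcol s hi₀s j]
                have h0 : ∑ i ∈ s, A i j = ∑ i ∈ s.erase i₀, A i j := by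
                  apply (sum_subset (erase_subset _ _) ?_).symm
                  intro i _ hi
                  by_contra hne
                  exact hi (hAsupp i j hne).1
                rw [h0, hAcol j hj, hb'def]
                dsimp only
                by_cases hjj : j = j₀
                · rw [if_pos hjj, if_pos hjj, hjj]; ring
                · rw [if_neg hjj, if_neg hjj, add_zero]
            · by_cases htb : tm = b j₀
              · -- demand at j₀ exhausted
                have hcard' : s.card + (t.erase j₀).card ≤ N := by
                  have := card_erase_of_mem hj₀t
                  have := card_pos.mpr ⟨j₀, hj₀t⟩
                  omega
                have hb'j₀ : b' j₀ = 0 := by rw [hb'def]; dsimp only; rw [if_pos rfl, htb]; ring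
                have heq'' : ∑ i ∈ s, a' i = ∑ j ∈ t.erase j₀, b' j := by
                  rw [heq', sum_erase _ hb'j₀]
                have hall'' : ∀ B ⊆ s,
                    ∑ i ∈ B, a' i ≤ ∑ j ∈ (t.erase j₀).filter (fun j => ∃ i ∈ B, R i j), b' j := by
                  intro B hB
                  have hfe : (t.erase j₀).filter (fun j => ∃ i ∈ B, R i j)
                      = (t.filter (fun j => ∃ i ∈ B, R i j)).erase j₀ := by
                    ext j; simp only [mem_filter, mem_erase]; tauto
                  rw [hfe, sum_erase _ hb'j₀]
                  exact hall' B hB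
                obtain ⟨A, hA0, hAsupp, hArow, hAcol⟩ :=
                  IH s (t.erase j₀) R hcard' a' b' ha' hb' heq'' hall''
                refine ⟨fun i j => A i j + D i j,
                  fun i j => add_nonneg (hA0 i j) (hD0 i j), ?_, ?_, ?_⟩
                · intro i j hne
                  beta_reduce at hne
                  rcases aux_or hne with h | h
                  · obtain ⟨h1, h2, h3⟩ := hAsupp i j h
                    exact ⟨h1, (erase_subset _ _) h2, h3⟩
                  · rw [hDdef] at h; dsimp only at h
                    by_cases hc : i = i₀ ∧ j = j₀
                    · rw [hc.1, hc.2]; exact ⟨hi₀s, hj₀t, hRij⟩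
                    · rw [if_neg hc] at h; exact absurd rfl h
                · intro i hi
                  rw [sum_add_distrib, hDrow t hj₀t i]
                  have h0 : ∑ j ∈ t, A i j = ∑ j ∈ t.erase j₀, A i j := by
                    apply (sum_subset (erase_subset _ _) ?_).symm
                    intro j _ hj
                    by_contra hne
                    exact hj (hAsupp i j hne).2.1
                  rw [h0, hArow i hi, ha'def]
                  dsimp only
                  by_cases hii : i = i₀
                  · rw [if_pos hii, if_pos hii, hii]; ring
                  · rw [if_neg hii, if_neg hii, add_zero]
                · intro j hj
                  rw [sum_add_distrib, hDcol s hi₀s j]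
                  by_cases hjj : j = j₀
                  · subst hjj
                    have h0 : ∑ i ∈ s, A i j = 0 := by
                      apply sum_eq_zero
                      intro i _
                      by_contra hne
                      exact (notMem_erase j t) (hAsupp i j hne).2.1
                    rw [h0, if_pos rfl, htb, zero_add]
                  · rw [if_neg hjj, add_zero, hAcol j (mem_erase.mpr ⟨hjj, hj⟩), hb'def]
                    dsimp only; rw [if_neg hjj]
              · -- tm equals the minimal slack: a tight set appears after shipping
                have h𝒮ne : 𝒮.Nonempty := by
                  by_contra hne
                  rw [htmdef, dif_neg hne] at hta htb
                  rcases min_cases (a i₀) (b j₀) with ⟨h, _⟩ | ⟨h, _⟩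
                  · exact hta h
                  · exact htb h
                have htm_inf : tm = 𝒮.inf' h𝒮ne slack := by
                  rw [htmdef, dif_pos h𝒮ne]
                  rcases min_cases (min (a i₀) (b j₀)) (𝒮.inf' h𝒮ne slack) with ⟨h, hle⟩ | ⟨h, _⟩
                  · exfalso
                    rcases min_cases (a i₀) (b j₀) with ⟨h2, _⟩ | ⟨h2, _⟩
                    · rw [htmdef, dif_pos h𝒮ne, h, h2] at hta; exact hta rfl
                    · rw [htmdef, dif_pos h𝒮ne, h, h2] at htb; exact htb rfl
                  · exact h
                obtain ⟨B₀, hB₀𝒮, hB₀inf⟩ := Finset.exists_mem_eq_inf' h𝒮ne slack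
                obtain ⟨hB₀pow, hi₀B₀, i₁, hi₁B₀, hRi₁⟩ := mem_filter.mp hB₀𝒮
                have hB₀s : B₀ ⊆ s := mem_powerset.mp hB₀pow
                have hB₀ne : B₀.Nonempty := ⟨i₁, hi₁B₀⟩
                have hB₀ne' : B₀ ≠ s := fun h => hi₀B₀ (h ▸ hi₀s)
                have hj₀NB₀ : j₀ ∈ t.filter (fun j => ∃ i ∈ B₀, R i j) :=
                  mem_filter.mpr ⟨hj₀t, i₁, hi₁B₀, hRi₁⟩
                have htightB₀ : ∑ i ∈ B₀, a' i
                    = ∑ j ∈ t.filter (fun j => ∃ i ∈ B₀, R i j), b' j := by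
                  rw [hsuma', hsumb', if_neg hi₀B₀, if_pos hj₀NB₀]
                  have : tm = slack B₀ := by rw [htm_inf, hB₀inf]
                  rw [hslackdef] at this
                  dsimp only at this
                  linarith
                obtain ⟨A, hA0, hAsupp, hArow, hAcol⟩ :=
                  key_tight a' b' ha' hb' heq' hall' B₀ hB₀s hB₀ne hB₀ne' htightB₀
                refine ⟨fun i j => A i j + D i j,
                  fun i j => add_nonneg (hA0 i j) (hD0 i j), ?_, ?_, ?_⟩
                · intro i j hne
                  beta_reduce at hne
                  rcases aux_or hne with h | h
                  · exact hAsupp i j h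
                  · rw [hDdef] at h; dsimp only at h
                    by_cases hc : i = i₀ ∧ j = j₀
                    · rw [hc.1, hc.2]; exact ⟨hi₀s, hj₀t, hRij⟩
                    · rw [if_neg hc] at h; exact absurd rfl h
                · intro i hi
                  rw [sum_add_distrib, hDrow t hj₀t i, hArow i hi, ha'def]
                  dsimp only
                  by_cases hii : i = i₀
                  · rw [if_pos hii, if_pos hii, hii]; ring
                  · rw [if_neg hii, if_neg hii, add_zero]
                · intro j hj
                  rw [sum_add_distrib, hDcol s hi₀s j, hAcol j hj, hb'def]
                  dsimp only
                  by_cases hjj : j = j₀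
                  · rw [if_pos hjj, if_pos hjj, hjj]; ring
                  · rw [if_neg hjj, if_neg hjj, add_zero]
end Hall


section Basics

variable {V : Type*} [DecidableEq V] (G : SimpleGraph V) [G.LocallyFinite]

lemma exists_adj_of_conn (hconn : G.Connected) {u w : V} (huw : u ≠ w) (v : V) :
    ∃ z, G.Adj v z := by
  have hz : ∃ z : V, z ≠ v := by
    by_cases h : u = v
    · exact ⟨w, fun hwv => huw (h.trans hwv.symm)⟩
    · exact ⟨u, h⟩
  obtain ⟨z, hzv⟩ := hz
  obtain ⟨p⟩ := hconn.preconnected v z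
  cases p with
  | nil => exact absurd rfl hzv
  | cons h _ => exact ⟨_, h⟩

lemma degree_pos_of_conn (hconn : G.Connected) {u w : V} (huw : u ≠ w) (v : V) :
    0 < G.degree v :=
  (G.degree_pos_iff_exists_adj v).mpr (exists_adj_of_conn G hconn huw v)

/-- McShane extension of a function that is `1`-Lipschitz on a finite set. -/
lemma mcshane (hconn : G.Connected) (s : Finset V) (hs : s.Nonempty) (φ : V → ℝ)
    (hφ : ∀ u ∈ s, ∀ w ∈ s, φ u - φ w ≤ (G.dist u w : ℝ)) :
    ∃ ψ : V → ℝ, (∀ u ∈ s, ψ u = φ u) ∧ ∀ u w : V, |ψ u - ψ w| ≤ (G.dist u w : ℝ) := by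
  set ψ : V → ℝ := fun v => s.inf' hs (fun u => φ u + (G.dist u v : ℝ)) with hψdef
  have hkey : ∀ u w : V, ψ u - ψ w ≤ (G.dist u w : ℝ) := by
    intro u w
    obtain ⟨u₀, hu₀s, hu₀⟩ := Finset.exists_mem_eq_inf' hs (fun z => φ z + (G.dist z w : ℝ))
    have h1 : ψ u ≤ φ u₀ + (G.dist u₀ u : ℝ) := Finset.inf'_le _ hu₀s
    have h2 : (G.dist u₀ u : ℝ) ≤ (G.dist u₀ w : ℝ) + (G.dist w u : ℝ) := by
      exact_mod_cast hconn.dist_triangle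
    have h3 : ψ w = φ u₀ + (G.dist u₀ w : ℝ) := hu₀
    have h4 : (G.dist w u : ℝ) = (G.dist u w : ℝ) := by
      rw [SimpleGraph.dist_comm]
    linarith
  refine ⟨ψ, ?_, ?_⟩
  · intro u hu
    have h1 : ψ u ≤ φ u := by
      have := Finset.inf'_le (fun z => φ z + (G.dist z u : ℝ)) hu
      rwa [SimpleGraph.dist_self, Nat.cast_zero, add_zero] at this
    have h2 : φ u ≤ ψ u := by
      rw [hψdef]
      rw [Finset.le_inf'_iff]
      intro z hz
      have := hφ u hu z hz
      have hc : (G.dist u z : ℝ) = (G.dist z u : ℝ) := by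
        rw [SimpleGraph.dist_comm]
      linarith
    linarith
  · intro u w
    rw [abs_sub_le_iff]
    refine ⟨hkey u w, ?_⟩
    have := hkey w u
    have hc : (G.dist w u : ℝ) = (G.dist u w : ℝ) := by
      rw [SimpleGraph.dist_comm]
    linarith

lemma lazyWalk_nonneg {α : ℝ} (hα0 : 0 ≤ α) (hα1 : α ≤ 1) (x v : V) :
    0 ≤ lazyWalk G α x v := by
  unfold lazyWalk
  split
  · exact hα0
  · split
    · apply div_nonneg (by linarith)
      exact Nat.cast_nonneg _
    · exact le_refl 0

lemma lazyWalk_le_one {α : ℝ} (hα0 : 0 ≤ α) (hα1 : α ≤ 1) {x : V} (hd : 0 < G.degree x)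
    (v : V) : lazyWalk G α x v ≤ 1 := by
  unfold lazyWalk
  split
  · exact hα1
  · split
    · rw [div_le_one (by exact_mod_cast hd)]
      have : (1 : ℝ) ≤ (G.degree x : ℝ) := by exact_mod_cast hd
      linarith
    · exact zero_le_one

lemma lazyWalk_support (α : ℝ) (x : V) :
    Function.support (lazyWalk G α x) ⊆ ↑(insert x (G.neighborFinset x)) := by
  intro v hv
  have hv' : lazyWalk G α x v ≠ 0 := hv
  unfold lazyWalk at hv'
  by_cases h1 : v = x
  · rw [h1]
    exact Finset.mem_coe.mpr (Finset.mem_insert_self x _)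
  · rw [if_neg h1] at hv'
    by_cases h2 : G.Adj x v
    · exact Finset.mem_coe.mpr
        (Finset.mem_insert_of_mem ((SimpleGraph.mem_neighborFinset ..).mpr h2))
    · rw [if_neg h2] at hv'
      exact absurd rfl hv'

lemma lazyWalk_sum_mul (α : ℝ) (x : V) (hd : 0 < G.degree x) (φ : V → ℝ) :
    ∑ᶠ v, lazyWalk G α x v * φ v = φ x + (1 - α) * graphLap G φ x := by
  have hsub : Function.support (fun v => lazyWalk G α x v * φ v)
      ⊆ ↑(insert x (G.neighborFinset x)) := by
    intro v hv
    have hv' : lazyWalk G α x v * φ v ≠ 0 := hv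
    apply lazyWalk_support G α x
    exact fun h => hv' (by rw [h, zero_mul])
  rw [finsum_eq_sum_of_support_subset _ hsub]
  rw [Finset.sum_insert (G.notMem_neighborFinset_self x)]
  have hx : lazyWalk G α x x = α := by unfold lazyWalk; rw [if_pos rfl]
  have hv : ∀ v ∈ G.neighborFinset x, lazyWalk G α x v * φ v
      = (1 - α) / (G.degree x : ℝ) * φ v := by
    intro v hvmem
    rw [SimpleGraph.mem_neighborFinset] at hvmem
    unfold lazyWalk
    rw [if_neg hvmem.ne', if_pos hvmem]
  rw [Finset.sum_congr rfl hv, hx, ← Finset.mul_sum]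
  unfold graphLap
  rw [Finset.sum_sub_distrib, Finset.sum_const, SimpleGraph.card_neighborFinset_eq_degree,
    nsmul_eq_mul]
  have hdeg : (G.degree x : ℝ) ≠ 0 := by
    have : (0:ℝ) < (G.degree x : ℝ) := by exact_mod_cast hd
    linarith
  field_simp
  ring

lemma lazyWalk_total (α : ℝ) (x : V) (hd : 0 < G.degree x) :
    ∑ᶠ v, lazyWalk G α x v = 1 := by
  have h := lazyWalk_sum_mul G α x hd (fun _ => 1)
  simp only [mul_one] at h
  rw [h]
  unfold graphLap
  simp

/-- Weak duality: any Lipschitz function gives a lower bound on the cost of any coupling. -/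
lemma dual_le_cost (ψ : V → ℝ) (hψ : ∀ u w : V, |ψ u - ψ w| ≤ (G.dist u w : ℝ))
    (m₁ m₂ : V → ℝ) (A : V → V → ℝ) (hA : IsCoupling m₁ m₂ A)
    (hA0 : ∀ u v, 0 ≤ A u v) :
    (∑ᶠ v, m₁ v * ψ v) - (∑ᶠ v, m₂ v * ψ v)
      ≤ ∑ᶠ p : V × V, A p.1 p.2 * (G.dist p.1 p.2 : ℝ) := by
  classical
  obtain ⟨hfin, hbound, hrow, hcol⟩ := hA
  set T : Finset (V × V) := hfin.toFinset with hTdef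
  have hTmem : ∀ p : V × V, A p.1 p.2 ≠ 0 → p ∈ T := by
    intro p hp
    rw [hTdef, Set.Finite.mem_toFinset]
    exact hp
  set T1 : Finset V := T.image Prod.fst with hT1def
  set T2 : Finset V := T.image Prod.snd with hT2def
  have hmemT1 : ∀ u v : V, A u v ≠ 0 → u ∈ T1 := by
    intro u v h
    rw [hT1def]
    exact Finset.mem_image.mpr ⟨(u, v), hTmem (u, v) h, rfl⟩
  have hmemT2 : ∀ u v : V, A u v ≠ 0 → v ∈ T2 := by
    intro u v h
    rw [hT2def]
    exact Finset.mem_image.mpr ⟨(u, v), hTmem (u, v) h, rfl⟩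
  -- rows and columns as finite sums
  have hrow' : ∀ u, m₁ u = ∑ v ∈ T2, A u v := by
    intro u
    rw [← hrow u]
    apply finsum_eq_sum_of_support_subset
    intro v hv
    exact Finset.mem_coe.mpr (hmemT2 u v hv)
  have hcol' : ∀ v, m₂ v = ∑ u ∈ T1, A u v := by
    intro v
    rw [← hcol v]
    apply finsum_eq_sum_of_support_subset
    intro u hu
    exact Finset.mem_coe.mpr (hmemT1 u v hu)
  have hm₁ : ∑ᶠ v, m₁ v * ψ v = ∑ u ∈ T1, m₁ u * ψ u := by
    apply finsum_eq_sum_of_support_subset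
    intro u hu
    have hu' : m₁ u * ψ u ≠ 0 := hu
    have hm : m₁ u ≠ 0 := fun h0 => hu' (by rw [h0, zero_mul])
    rw [hrow'] at hm
    obtain ⟨v, _, hv⟩ := Finset.exists_ne_zero_of_sum_ne_zero hm
    exact Finset.mem_coe.mpr (hmemT1 u v hv)
  have hm₂ : ∑ᶠ v, m₂ v * ψ v = ∑ v ∈ T2, m₂ v * ψ v := by
    apply finsum_eq_sum_of_support_subset
    intro v hv
    have hv' : m₂ v * ψ v ≠ 0 := hv
    have hm : m₂ v ≠ 0 := fun h0 => hv' (by rw [h0, zero_mul])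
    rw [hcol'] at hm
    obtain ⟨u, _, hu⟩ := Finset.exists_ne_zero_of_sum_ne_zero hm
    exact Finset.mem_coe.mpr (hmemT2 u v hu)
  have hcost : ∑ᶠ p : V × V, A p.1 p.2 * (G.dist p.1 p.2 : ℝ)
      = ∑ p ∈ T1 ×ˢ T2, A p.1 p.2 * (G.dist p.1 p.2 : ℝ) := by
    apply finsum_eq_sum_of_support_subset
    intro p hp
    have hp' : A p.1 p.2 * (G.dist p.1 p.2 : ℝ) ≠ 0 := hp
    have hAp : A p.1 p.2 ≠ 0 := fun h => hp' (by rw [h, zero_mul])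
    exact Finset.mem_coe.mpr
      (Finset.mem_product.mpr ⟨hmemT1 p.1 p.2 hAp, hmemT2 p.1 p.2 hAp⟩)
  rw [hm₁, hm₂, hcost]
  have hL : ∑ u ∈ T1, m₁ u * ψ u = ∑ p ∈ T1 ×ˢ T2, A p.1 p.2 * ψ p.1 := by
    rw [Finset.sum_product]
    apply Finset.sum_congr rfl
    intro u _
    rw [hrow' u, Finset.sum_mul]
  have hR : ∑ v ∈ T2, m₂ v * ψ v = ∑ p ∈ T1 ×ˢ T2, A p.1 p.2 * ψ p.2 := by
    rw [Finset.sum_product_right]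
    apply Finset.sum_congr rfl
    intro v _
    rw [hcol' v, Finset.sum_mul]
  rw [hL, hR, ← Finset.sum_sub_distrib]
  apply Finset.sum_le_sum
  intro p _
  have h1 : A p.1 p.2 * ψ p.1 - A p.1 p.2 * ψ p.2 = A p.1 p.2 * (ψ p.1 - ψ p.2) := by ring
  rw [h1]
  apply mul_le_mul_of_nonneg_left _ (hA0 p.1 p.2)
  exact le_trans (le_abs_self _) (hψ p.1 p.2)

end Basics


section Duality

variable {V : Type*} [DecidableEq V] (G : SimpleGraph V) [G.LocallyFinite]

lemma graphLap_sub_const (φ : V → ℝ) (c : ℝ) (w : V) :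
    graphLap G (fun v => φ v - c) w = graphLap G φ w := by
  unfold graphLap
  congr 1
  apply Finset.sum_congr rfl
  intro u _
  ring

lemma lazyWalk_supp_sub {α : ℝ} {x : V} {s : Finset V} (hx : x ∈ s)
    (hΓ : ∀ v, G.Adj x v → v ∈ s) :
    Function.support (lazyWalk G α x) ⊆ ↑s := by
  intro v hv
  have hv' : lazyWalk G α x v ≠ 0 := hv
  unfold lazyWalk at hv'
  by_cases h1 : v = x
  · rw [h1]; exact hx
  · rw [if_neg h1] at hv'
    by_cases h2 : G.Adj x v
    · exact hΓ v h2
    · rw [if_neg h2] at hv'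
      exact absurd rfl hv'

lemma lazyWalk_sum_eq {α : ℝ} {x : V} {s : Finset V} (hx : x ∈ s)
    (hΓ : ∀ v, G.Adj x v → v ∈ s) (hd : 0 < G.degree x) :
    ∑ v ∈ s, lazyWalk G α x v = 1 := by
  rw [← lazyWalk_total G α x hd]
  exact (finsum_eq_sum_of_support_subset _ (lazyWalk_supp_sub G hx hΓ)).symm

lemma lazyWalk_sum_mul_eq {α : ℝ} {x : V} {s : Finset V} (hx : x ∈ s)
    (hΓ : ∀ v, G.Adj x v → v ∈ s) (hd : 0 < G.degree x) (φ : V → ℝ) :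
    ∑ v ∈ s, lazyWalk G α x v * φ v = φ x + (1 - α) * graphLap G φ x := by
  rw [← lazyWalk_sum_mul G α x hd φ]
  refine (finsum_eq_sum_of_support_subset _ ?_).symm
  intro v hv
  have hv' : lazyWalk G α x v * φ v ≠ 0 := hv
  exact lazyWalk_supp_sub G hx hΓ (fun h => hv' (by rw [h, zero_mul]))

/-- Strong Kantorovich duality for the lazy random walk measures. -/
lemma strong_dual (hconn : G.Connected) {x y : V} (hxy : x ≠ y) {α : ℝ}
    (hα0 : 0 ≤ α) (hα1 : α < 1) :
    ∃ φ : V → ℝ,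
      (∀ u w : V, |φ u - φ w| ≤ (G.dist u w : ℝ)) ∧ φ x = 0 ∧
      (∃ A : V → V → ℝ, IsCoupling (lazyWalk G α x) (lazyWalk G α y) A) ∧
      transportDist G (lazyWalk G α x) (lazyWalk G α y)
        = (φ x - φ y) + (1 - α) * (graphLap G φ x - graphLap G φ y) := by
  classical
  have hdx : 0 < G.degree x := degree_pos_of_conn G hconn hxy x
  have hdy : 0 < G.degree y := degree_pos_of_conn G hconn hxy y
  set m₁ : V → ℝ := lazyWalk G α x with hm₁def
  set m₂ : V → ℝ := lazyWalk G α y with hm₂def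
  set B : Finset V := insert x (insert y (G.neighborFinset x ∪ G.neighborFinset y)) with hBdef
  have hxB : x ∈ B := Finset.mem_insert_self x _
  have hyB : y ∈ B := Finset.mem_insert_of_mem (Finset.mem_insert_self y _)
  have hΓxB : ∀ v, G.Adj x v → v ∈ B := by
    intro v hv
    apply Finset.mem_insert_of_mem
    apply Finset.mem_insert_of_mem
    exact Finset.mem_union_left _ ((SimpleGraph.mem_neighborFinset ..).mpr hv)
  have hΓyB : ∀ v, G.Adj y v → v ∈ B := by
    intro v hv
    apply Finset.mem_insert_of_mem
    apply Finset.mem_insert_of_mem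
    exact Finset.mem_union_right _ ((SimpleGraph.mem_neighborFinset ..).mpr hv)
  have hm₁0 : ∀ v, 0 ≤ m₁ v := lazyWalk_nonneg G hα0 hα1.le x
  have hm₂0 : ∀ v, 0 ≤ m₂ v := lazyWalk_nonneg G hα0 hα1.le y
  have hm₁1 : ∀ v, m₁ v ≤ 1 := lazyWalk_le_one G hα0 hα1.le hdx
  have hm₁supp : Function.support m₁ ⊆ ↑B := lazyWalk_supp_sub G hxB hΓxB
  have hm₂supp : Function.support m₂ ⊆ ↑B := lazyWalk_supp_sub G hyB hΓyB
  have hm₁out : ∀ v, v ∉ B → m₁ v = 0 := by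
    intro v hv
    by_contra h
    exact hv (hm₁supp h)
  have hm₂out : ∀ v, v ∉ B → m₂ v = 0 := by
    intro v hv
    by_contra h
    exact hv (hm₂supp h)
  have hsum₁ : ∑ v ∈ B, m₁ v = 1 := lazyWalk_sum_eq G hxB hΓxB hdx
  have hsum₂ : ∑ v ∈ B, m₂ v = 1 := lazyWalk_sum_eq G hyB hΓyB hdy
  have hsumdiff : ∑ v ∈ B, (m₁ v - m₂ v) = 0 := by
    rw [Finset.sum_sub_distrib, hsum₁, hsum₂, sub_self]
  -- the compact set of normalized functions Lipschitz on B, vanishing outside B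
  set K : Set (V → ℝ) := {g | g x = 0 ∧ (∀ v, v ∉ B → g v = 0) ∧
      ∀ u ∈ B, ∀ w ∈ B, |g u - g w| ≤ (G.dist u w : ℝ)} with hKdef
  set J : (V → ℝ) → ℝ := fun g => ∑ v ∈ B, (m₁ v - m₂ v) * g v with hJdef
  have hKclosed : IsClosed K := by
    have hrw : K = ((fun g : V → ℝ => g x) ⁻¹' {0}) ∩
        ((⋂ (v : V), ⋂ (_ : v ∉ B), (fun g : V → ℝ => g v) ⁻¹' {0}) ∩
         (⋂ (u : V), ⋂ (_ : u ∈ B), ⋂ (w : V), ⋂ (_ : w ∈ B),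
           {g : V → ℝ | |g u - g w| ≤ (G.dist u w : ℝ)})) := by
      ext g
      simp only [hKdef, Set.mem_setOf_eq, Set.mem_inter_iff, Set.mem_preimage,
        Set.mem_singleton_iff, Set.mem_iInter]
    rw [hrw]
    refine IsClosed.inter ?_ (IsClosed.inter ?_ ?_)
    · exact isClosed_singleton.preimage (continuous_apply x)
    · exact isClosed_iInter fun v => isClosed_iInter fun _ =>
        isClosed_singleton.preimage (continuous_apply v)
    · refine isClosed_iInter fun u => isClosed_iInter fun _ =>
        isClosed_iInter fun w => isClosed_iInter fun _ => ?_
      exact isClosed_le ((continuous_apply u).sub (continuous_apply w)).abs continuous_const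
  have hKcpt : IsCompact K := by
    apply IsCompact.of_isClosed_subset
      (isCompact_univ_pi (s := fun v : V =>
        if v ∈ B then Set.Icc (-(G.dist v x : ℝ)) (G.dist v x : ℝ) else ({0} : Set ℝ)) ?_)
      hKclosed ?_
    · intro v
      split
      · exact isCompact_Icc
      · exact isCompact_singleton
    · intro g hg v _
      dsimp only
      obtain ⟨hgx, hgout, hglip⟩ := hg
      split
      · next hv =>
        have := hglip v hv x hxB
        rw [hgx, sub_zero] at this
        exact Set.mem_Icc.mpr (abs_le.mp this)
      · next hv => exact hgout v hv
  have hK0 : (fun _ : V => (0:ℝ)) ∈ K := by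
    refine ⟨rfl, fun _ _ => rfl, ?_⟩
    intro u _ w _
    rw [sub_zero, abs_zero]
    exact Nat.cast_nonneg _
  have hJcont : Continuous J := by
    apply continuous_finset_sum
    intro v _
    exact continuous_const.mul (continuous_apply v)
  obtain ⟨g, hgK, hgmax⟩ := hKcpt.exists_isMaxOn ⟨_, hK0⟩ hJcont.continuousOn
  rw [isMaxOn_iff] at hgmax
  obtain ⟨hgx, hgout, hglip⟩ := hgK
  -- the saturation relation
  set R : V → V → Prop := fun u w => g u - g w = (G.dist u w : ℝ) with hRdef
  have hRrefl : ∀ u, R u u := by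
    intro u
    rw [hRdef]
    dsimp only
    rw [sub_self, SimpleGraph.dist_self, Nat.cast_zero]
  have hRtrans : ∀ u ∈ B, ∀ v ∈ B, ∀ w ∈ B, R u v → R v w → R u w := by
    intro u hu v hv w hw h1 h2
    rw [hRdef] at h1 h2 ⊢
    dsimp only at h1 h2 ⊢
    have htri : (G.dist u w : ℝ) ≤ (G.dist u v : ℝ) + (G.dist v w : ℝ) := by
      exact_mod_cast hconn.dist_triangle
    have hle : g u - g w ≤ (G.dist u w : ℝ) :=
      le_trans (le_abs_self _) (hglip u hu w hw)
    linarith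
  -- Hall's condition for the saturation graph
  have hHall : ∀ B' ⊆ B, ∑ v ∈ B', m₁ v
      ≤ ∑ w ∈ B.filter (fun w => ∃ u ∈ B', R u w), m₂ w := by
    intro B' hB'
    by_contra hlt
    push_neg at hlt
    set C : Finset V := B.filter (fun w => ∃ u ∈ B', R u w) with hCdef
    have hCB : C ⊆ B := Finset.filter_subset _ _
    have hB'C : B' ⊆ C := by
      intro u hu
      rw [hCdef, Finset.mem_filter]
      exact ⟨hB' hu, u, hu, hRrefl u⟩
    have hCclosed : ∀ u ∈ C, ∀ w ∈ B, R u w → w ∈ C := by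
      intro u hu w hw hR
      rw [hCdef, Finset.mem_filter] at hu ⊢
      obtain ⟨huB, u₀, hu₀, hRu₀⟩ := hu
      exact ⟨hw, u₀, hu₀, hRtrans u₀ (hB' hu₀) u huB w hw hRu₀ hR⟩
    -- minimal positive slack over pairs leaving C
    set P : Finset (V × V) := (B ×ˢ B).filter (fun p => p.1 ∈ C ∧ p.2 ∉ C) with hPdef
    set slack : V × V → ℝ := fun p => (G.dist p.1 p.2 : ℝ) - (g p.1 - g p.2) with hslackdef
    have hslackpos : ∀ p ∈ P, 0 < slack p := by
      intro p hp
      rw [hPdef, Finset.mem_filter, Finset.mem_product] at hp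
      obtain ⟨⟨h1B, h2B⟩, h1C, h2C⟩ := hp
      rw [hslackdef]
      dsimp only
      have hle : g p.1 - g p.2 ≤ (G.dist p.1 p.2 : ℝ) :=
        le_trans (le_abs_self _) (hglip p.1 h1B p.2 h2B)
      rcases hle.lt_or_eq with h | h
      · linarith
      · exact absurd (hCclosed p.1 h1C p.2 h2B h) h2C
    set ε : ℝ := if hP : P.Nonempty then P.inf' hP slack else 1 with hεdef
    have hεpos : 0 < ε := by
      rw [hεdef]
      split
      · next hP =>
        rw [Finset.lt_inf'_iff]
        exact hslackpos
      · exact zero_lt_one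
    have hεle : ∀ p ∈ P, ε ≤ slack p := by
      intro p hp
      rw [hεdef, dif_pos ⟨p, hp⟩]
      exact Finset.inf'_le _ hp
    -- the perturbed function
    set cst : ℝ := if x ∈ C then ε else 0 with hcstdef
    set g' : V → ℝ := fun v =>
      if v ∈ B then (g v + (if v ∈ C then ε else 0) - cst) else 0 with hg'def
    have hg'B : ∀ v ∈ B, g' v = g v + (if v ∈ C then ε else 0) - cst := by
      intro v hv
      rw [hg'def]
      dsimp only
      rw [if_pos hv]
    have hg'K : g' ∈ K := by
      refine ⟨?_, ?_, ?_⟩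
      · rw [hg'B x hxB, hcstdef, hgx]
        split_ifs with h <;> ring
      · intro v hv
        rw [hg'def]
        dsimp only
        rw [if_neg hv]
      · intro u hu w hw
        rw [hg'B u hu, hg'B w hw]
        have hgd : |g u - g w| ≤ (G.dist u w : ℝ) := hglip u hu w hw
        rw [abs_le] at hgd ⊢
        split_ifs with h1 h2 h2
        · constructor <;> linarith
        · have hP1 : (u, w) ∈ P := by
            rw [hPdef, Finset.mem_filter, Finset.mem_product]
            exact ⟨⟨hu, hw⟩, h1, h2⟩
          have h3 := hεle _ hP1
          have h3' : (G.dist u w : ℝ) - (g u - g w) ≥ ε := h3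
          constructor <;> linarith
        · have hP1 : (w, u) ∈ P := by
            rw [hPdef, Finset.mem_filter, Finset.mem_product]
            exact ⟨⟨hw, hu⟩, h2, h1⟩
          have h3 := hεle _ hP1
          have h3' : (G.dist w u : ℝ) - (g w - g u) ≥ ε := h3
          have h4 : (G.dist w u : ℝ) = (G.dist u w : ℝ) := by
            rw [SimpleGraph.dist_comm]
          constructor <;> linarith
        · constructor <;> linarith
    -- the objective strictly increases: contradiction
    have hJg' : J g' = J g + ε * (∑ v ∈ B, (if v ∈ C then (m₁ v - m₂ v) else 0))
        - cst * ∑ v ∈ B, (m₁ v - m₂ v) := by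
      have hpt : ∀ v ∈ B, (m₁ v - m₂ v) * g' v
          = ((m₁ v - m₂ v) * g v + ε * (if v ∈ C then (m₁ v - m₂ v) else 0))
            - cst * (m₁ v - m₂ v) := by
        intro v hv
        rw [hg'B v hv]
        split_ifs with h <;> ring
      rw [hJdef]
      dsimp only
      rw [Finset.sum_congr rfl hpt, Finset.sum_sub_distrib, Finset.sum_add_distrib,
        ← Finset.mul_sum, ← Finset.mul_sum]
    have hCsum : ∑ v ∈ B, (if v ∈ C then (m₁ v - m₂ v) else 0)
        = ∑ v ∈ C, (m₁ v - m₂ v) := by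
      rw [← Finset.sum_filter]
      congr 1
      ext v
      simp only [Finset.mem_filter]
      exact ⟨fun h => h.2, fun h => ⟨hCB h, h⟩⟩
    have hm₁C : ∑ v ∈ B', m₁ v ≤ ∑ v ∈ C, m₁ v := by
      apply Finset.sum_le_sum_of_subset_of_nonneg hB'C
      intro v _ _
      exact hm₁0 v
    have hgain : J g < J g' := by
      rw [hJg', hCsum, hsumdiff, mul_zero, sub_zero, Finset.sum_sub_distrib]
      have : 0 < ε * (∑ v ∈ C, m₁ v - ∑ v ∈ C, m₂ v) := by
        apply mul_pos hεpos
        rw [hCdef]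
        linarith
      linarith
    exact absurd (hgmax g' hg'K) (not_le.mpr hgain)
  -- apply fractional Hall to get an optimal coupling
  obtain ⟨A₀, hA₀0, hA₀supp, hA₀row, hA₀col⟩ :=
    fracHall (B.card + B.card) B B R (le_refl _) m₁ m₂ hm₁0 hm₂0
      (by rw [hsum₁, hsum₂]) hHall
  -- A₀ is a genuine coupling
  have hA₀supp' : Function.support (fun p : V × V => A₀ p.1 p.2) ⊆ ↑(B ×ˢ B) := by
    intro p hp
    have hp' : A₀ p.1 p.2 ≠ 0 := hp
    obtain ⟨h1, h2, _⟩ := hA₀supp p.1 p.2 hp'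
    exact Finset.mem_coe.mpr (Finset.mem_product.mpr ⟨h1, h2⟩)
  have hA₀rowf : ∀ u, ∑ᶠ v, A₀ u v = m₁ u := by
    intro u
    have hsub : Function.support (fun v => A₀ u v) ⊆ ↑B := by
      intro v hv
      exact Finset.mem_coe.mpr (hA₀supp u v hv).2.1
    rw [finsum_eq_sum_of_support_subset _ hsub]
    by_cases hu : u ∈ B
    · exact hA₀row u hu
    · rw [hm₁out u hu]
      apply Finset.sum_eq_zero
      intro v _
      by_contra hne
      exact hu (hA₀supp u v hne).1
  have hA₀colf : ∀ v, ∑ᶠ u, A₀ u v = m₂ v := by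
    intro v
    have hsub : Function.support (fun u => A₀ u v) ⊆ ↑B := by
      intro u hu
      exact Finset.mem_coe.mpr (hA₀supp u v hu).1
    rw [finsum_eq_sum_of_support_subset _ hsub]
    by_cases hv : v ∈ B
    · exact hA₀col v hv
    · rw [hm₂out v hv]
      apply Finset.sum_eq_zero
      intro u _
      by_contra hne
      exact hv (hA₀supp u v hne).2.1
  have hA₀le1 : ∀ u v, A₀ u v ≤ 1 := by
    intro u v
    by_cases h : A₀ u v = 0
    · rw [h]; exact zero_le_one
    · obtain ⟨huB, hvB, _⟩ := hA₀supp u v h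
      calc A₀ u v ≤ ∑ w ∈ B, A₀ u w :=
            Finset.single_le_sum (fun w _ => hA₀0 u w) hvB
        _ = m₁ u := hA₀row u huB
        _ ≤ 1 := hm₁1 u
  have hA₀coupling : IsCoupling m₁ m₂ A₀ := by
    unfold IsCoupling
    exact ⟨Set.Finite.subset (B ×ˢ B).finite_toSet hA₀supp',
      fun u v => ⟨hA₀0 u v, hA₀le1 u v⟩, hA₀rowf, hA₀colf⟩
  -- the cost of A₀ equals the dual objective value of g
  have hcostA₀ : ∑ᶠ p : V × V, A₀ p.1 p.2 * (G.dist p.1 p.2 : ℝ) = J g := by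
    have hsub : Function.support (fun p : V × V => A₀ p.1 p.2 * (G.dist p.1 p.2 : ℝ))
        ⊆ ↑(B ×ˢ B) := by
      intro p hp
      have hp' : A₀ p.1 p.2 * (G.dist p.1 p.2 : ℝ) ≠ 0 := hp
      have hAne : A₀ p.1 p.2 ≠ 0 := fun h => hp' (by rw [h, zero_mul])
      exact hA₀supp' hAne
    rw [finsum_eq_sum_of_support_subset _ hsub]
    have hterm : ∀ p ∈ B ×ˢ B, A₀ p.1 p.2 * (G.dist p.1 p.2 : ℝ)
        = A₀ p.1 p.2 * g p.1 - A₀ p.1 p.2 * g p.2 := by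
      intro p _
      by_cases h : A₀ p.1 p.2 = 0
      · rw [h]; ring
      · have hR' : g p.1 - g p.2 = (G.dist p.1 p.2 : ℝ) := (hA₀supp p.1 p.2 h).2.2
        rw [← hR']
        ring
    rw [Finset.sum_congr rfl hterm, Finset.sum_sub_distrib]
    have hL : ∑ p ∈ B ×ˢ B, A₀ p.1 p.2 * g p.1 = ∑ u ∈ B, m₁ u * g u := by
      rw [Finset.sum_product]
      apply Finset.sum_congr rfl
      intro u hu
      dsimp only
      rw [← Finset.sum_mul, hA₀row u hu]
    have hR2 : ∑ p ∈ B ×ˢ B, A₀ p.1 p.2 * g p.2 = ∑ v ∈ B, m₂ v * g v := by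
      rw [Finset.sum_product_right]
      apply Finset.sum_congr rfl
      intro v hv
      dsimp only
      rw [← Finset.sum_mul, hA₀col v hv]
    rw [hL, hR2, hJdef]
    dsimp only
    rw [← Finset.sum_sub_distrib]
    apply Finset.sum_congr rfl
    intro v _
    ring
  -- extend g to a globally Lipschitz function
  have hglip' : ∀ u ∈ B, ∀ w ∈ B, g u - g w ≤ (G.dist u w : ℝ) := by
    intro u hu w hw
    exact le_trans (le_abs_self _) (hglip u hu w hw)
  obtain ⟨ψ, hψB, hψlip⟩ := mcshane G hconn B ⟨x, hxB⟩ g hglip'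
  -- dual value of ψ equals J g
  have hJψ : (∑ᶠ v, m₁ v * ψ v) - (∑ᶠ v, m₂ v * ψ v) = J g := by
    have h1 : ∑ᶠ v, m₁ v * ψ v = ∑ v ∈ B, m₁ v * ψ v := by
      apply finsum_eq_sum_of_support_subset
      intro v hv
      have hv' : m₁ v * ψ v ≠ 0 := hv
      exact hm₁supp (fun h => hv' (by rw [h, zero_mul]))
    have h2 : ∑ᶠ v, m₂ v * ψ v = ∑ v ∈ B, m₂ v * ψ v := by
      apply finsum_eq_sum_of_support_subset
      intro v hv
      have hv' : m₂ v * ψ v ≠ 0 := hv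
      exact hm₂supp (fun h => hv' (by rw [h, zero_mul]))
    rw [h1, h2, hJdef]
    dsimp only
    rw [← Finset.sum_sub_distrib]
    apply Finset.sum_congr rfl
    intro v hv
    rw [hψB v hv]
    ring
  -- identify the transport distance
  set W : ℝ := transportDist G m₁ m₂ with hWdef
  have hbdd : ∀ w ∈ {w : ℝ | ∃ A : V → V → ℝ, IsCoupling m₁ m₂ A ∧
      w = ∑ᶠ p : V × V, A p.1 p.2 * (G.dist p.1 p.2 : ℝ)}, (0:ℝ) ≤ w := by
    rintro w ⟨A, hA, rfl⟩
    obtain ⟨-, hAb, -, -⟩ := hA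
    apply finsum_nonneg
    intro p
    exact mul_nonneg (hAb p.1 p.2).1 (Nat.cast_nonneg _)
  have hmem : (∑ᶠ p : V × V, A₀ p.1 p.2 * (G.dist p.1 p.2 : ℝ))
      ∈ {w : ℝ | ∃ A : V → V → ℝ, IsCoupling m₁ m₂ A ∧
      w = ∑ᶠ p : V × V, A p.1 p.2 * (G.dist p.1 p.2 : ℝ)} := ⟨A₀, hA₀coupling, rfl⟩
  have hWle : W ≤ J g := by
    rw [hWdef, ← hcostA₀]
    exact csInf_le ⟨0, hbdd⟩ hmem
  have hWge : J g ≤ W := by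
    rw [hWdef]
    apply le_csInf ⟨_, hmem⟩
    rintro w ⟨A, hA, rfl⟩
    rw [← hJψ]
    have hAb := hA
    obtain ⟨-, hAb, -, -⟩ := hAb
    exact dual_le_cost G ψ hψlip m₁ m₂ A hA (fun u v => (hAb u v).1)
  have hWeq : W = J g := le_antisymm hWle hWge
  -- final form
  have hval : J g = (ψ x - ψ y) + (1 - α) * (graphLap G ψ x - graphLap G ψ y) := by
    rw [← hJψ]
    rw [hm₁def, hm₂def, lazyWalk_sum_mul G α x hdx ψ, lazyWalk_sum_mul G α y hdy ψ]
    ring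
  refine ⟨fun v => ψ v - ψ x, ?_, by ring, ⟨A₀, hA₀coupling⟩, ?_⟩
  · intro u w
    have := hψlip u w
    have h2 : ψ u - ψ x - (ψ w - ψ x) = ψ u - ψ w := by ring
    rw [h2]
    exact this
  · rw [hWeq, hval, graphLap_sub_const, graphLap_sub_const]
    ring

/-- Weak duality specialized to the lazy walk measures. -/
lemma weak_dual (hconn : G.Connected) {x y : V} (hxy : x ≠ y) {α : ℝ}
    (hne : ∃ A : V → V → ℝ, IsCoupling (lazyWalk G α x) (lazyWalk G α y) A)
    (ψ : V → ℝ) (hψ : ∀ u w : V, |ψ u - ψ w| ≤ (G.dist u w : ℝ)) :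
    (ψ x - ψ y) + (1 - α) * (graphLap G ψ x - graphLap G ψ y)
      ≤ transportDist G (lazyWalk G α x) (lazyWalk G α y) := by
  have hdx : 0 < G.degree x := degree_pos_of_conn G hconn hxy x
  have hdy : 0 < G.degree y := degree_pos_of_conn G hconn hxy y
  obtain ⟨A₁, hA₁⟩ := hne
  have hmem : (∑ᶠ p : V × V, A₁ p.1 p.2 * (G.dist p.1 p.2 : ℝ))
      ∈ {w : ℝ | ∃ A : V → V → ℝ, IsCoupling (lazyWalk G α x) (lazyWalk G α y) A ∧
      w = ∑ᶠ p : V × V, A p.1 p.2 * (G.dist p.1 p.2 : ℝ)} := ⟨A₁, hA₁, rfl⟩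
  apply le_csInf ⟨_, hmem⟩
  rintro w ⟨A, hA, rfl⟩
  have hAb := hA
  obtain ⟨-, hAb, -, -⟩ := hAb
  have h := dual_le_cost G ψ hψ (lazyWalk G α x) (lazyWalk G α y) A hA
    (fun u v => (hAb u v).1)
  rw [lazyWalk_sum_mul G α x hdx ψ, lazyWalk_sum_mul G α y hdy ψ] at h
  calc (ψ x - ψ y) + (1 - α) * (graphLap G ψ x - graphLap G ψ y)
      = (ψ x + (1 - α) * graphLap G ψ x) - (ψ y + (1 - α) * graphLap G ψ y) := by ring
    _ ≤ _ := h

end Duality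


section FinalHelpers

variable {V : Type*} [DecidableEq V] (G : SimpleGraph V) [G.LocallyFinite]

lemma graphLap_neg (f : V → ℝ) (w : V) :
    graphLap G (fun v => -(f v)) w = -(graphLap G f w) := by
  unfold graphLap
  have h : ∀ u ∈ G.neighborFinset w, (-(f u)) - (-(f w)) = -(f u - f w) :=
    fun u _ => by ring
  rw [Finset.sum_congr rfl h, Finset.sum_neg_distrib, neg_div]

lemma graphLap_congr {f g : V → ℝ} {w : V} (hw : f w = g w)
    (h : ∀ u, G.Adj w u → f u = g u) : graphLap G f w = graphLap G g w := by
  unfold graphLap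
  congr 1
  apply Finset.sum_congr rfl
  intro u hu
  rw [h u ((SimpleGraph.mem_neighborFinset ..).mp hu), hw]

lemma abs_graphLap_le (f : V → ℝ) (hf : ∀ u w : V, |f u - f w| ≤ (G.dist u w : ℝ))
    {w : V} (hd : 0 < G.degree w) : |graphLap G f w| ≤ 1 := by
  unfold graphLap
  rw [abs_div, Nat.abs_cast, div_le_one (by exact_mod_cast hd)]
  calc |∑ u ∈ G.neighborFinset w, (f u - f w)|
      ≤ ∑ u ∈ G.neighborFinset w, |f u - f w| := Finset.abs_sum_le_sum_abs _ _
    _ ≤ ∑ u ∈ G.neighborFinset w, (1:ℝ) := by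
        apply Finset.sum_le_sum
        intro u hu
        have hadj : G.Adj w u := (SimpleGraph.mem_neighborFinset ..).mp hu
        have hdist : G.dist u w = 1 := SimpleGraph.dist_eq_one_iff_adj.mpr hadj.symm
        calc |f u - f w| ≤ (G.dist u w : ℝ) := hf u w
          _ = 1 := by rw [hdist]; norm_num
    _ = (G.degree w : ℝ) := by
        rw [Finset.sum_const, SimpleGraph.card_neighborFinset_eq_degree, nsmul_eq_mul, mul_one]

end FinalHelpers


/-- Theorem 4 (curvature via the Laplacian): for distinct vertices `x ≠ y` of a simple
connected graph, `κ_LLY(x,y) = inf { ∇_{xy} Δf : f 1-Lipschitz, ∇_{yx} f = 1 }`,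
where `∇_{xy} g = (g x - g y)/d(x,y)`. -/
theorem curvature_via_laplacian (G : SimpleGraph V) [G.LocallyFinite]
    (hconn : G.Connected) (x y : V) (hxy : x ≠ y) :
    HasLLYCurv G x y (sInf {r : ℝ | ∃ f : V → ℝ,
      (∀ u w : V, |f u - f w| ≤ (G.dist u w : ℝ)) ∧
      (f y - f x) / (G.dist y x : ℝ) = 1 ∧
      r = (graphLap G f x - graphLap G f y) / (G.dist x y : ℝ)}) := by
  
  classical
  have hdx : 0 < G.degree x := degree_pos_of_conn G hconn hxy x
  have hdy : 0 < G.degree y := degree_pos_of_conn G hconn hxy y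
  unfold HasLLYCurv
  set n : ℝ := (G.dist x y : ℝ) with hndef
  have hnpos : (0:ℝ) < n := by
    rw [hndef]
    exact_mod_cast hconn.pos_dist_of_ne hxy
  have hn0 : n ≠ 0 := ne_of_gt hnpos
  have hdyx : (G.dist y x : ℝ) = n := by rw [hndef, SimpleGraph.dist_comm]
  set S : Set ℝ := {r : ℝ | ∃ f : V → ℝ,
      (∀ u w : V, |f u - f w| ≤ (G.dist u w : ℝ)) ∧
      (f y - f x) / (G.dist y x : ℝ) = 1 ∧
      r = (graphLap G f x - graphLap G f y) / n} with hSdef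
  -- S is nonempty
  have hSne : S.Nonempty := by
    refine ⟨_, ⟨(fun v => -(G.dist y v : ℝ)), ?_, ?_, rfl⟩⟩
    · intro u w
      dsimp only
      rw [show -(G.dist y u : ℝ) - -(G.dist y w : ℝ)
        = (G.dist y w : ℝ) - (G.dist y u : ℝ) by ring, abs_sub_le_iff]
      constructor
      · have h1 : (G.dist y w : ℝ) ≤ (G.dist y u : ℝ) + (G.dist u w : ℝ) := by
          exact_mod_cast hconn.dist_triangle
        linarith
      · have h1 : (G.dist y u : ℝ) ≤ (G.dist y w : ℝ) + (G.dist w u : ℝ) := by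
          exact_mod_cast hconn.dist_triangle
        have h2 : (G.dist w u : ℝ) = (G.dist u w : ℝ) := by rw [SimpleGraph.dist_comm]
        linarith
    · dsimp only
      rw [SimpleGraph.dist_self]
      have hpos : (0:ℝ) < (G.dist y x : ℝ) := by rw [hdyx]; exact hnpos
      rw [Nat.cast_zero, neg_zero, zero_sub, neg_neg]
      exact div_self (ne_of_gt hpos)
  -- S is bounded below
  have hSbdd : BddBelow S := by
    refine ⟨-(2/n), ?_⟩
    rintro r ⟨f, hf, -, rfl⟩
    have h1 := abs_le.mp (abs_graphLap_le G f hf hdx)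
    have h2 := abs_le.mp (abs_graphLap_le G f hf hdy)
    have h3 : -2 ≤ graphLap G f x - graphLap G f y := by linarith [h1.1, h2.2]
    calc -(2/n) = (-2)/n := by ring
      _ ≤ (graphLap G f x - graphLap G f y)/n := (div_le_div_iff_of_pos_right hnpos).mpr h3
  -- upper bound: κ_α/(1-α) is at most every element of S
  have hupper : ∀ α : ℝ, 0 ≤ α → α < 1 → ∀ r ∈ S, alphaRicci G α x y / (1 - α) ≤ r := by
    intro α hα0 hα1 r hr
    rw [hSdef] at hr
    obtain ⟨f, hflip, hfnorm, hfr⟩ := hr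
    obtain ⟨φ, -, -, hne, -⟩ := strong_dual G hconn hxy hα0 hα1
    have hψlip : ∀ u w : V, |(fun v => -(f v)) u - (fun v => -(f v)) w| ≤ (G.dist u w : ℝ) := by
      intro u w
      dsimp only
      rw [show -(f u) - -(f w) = -(f u - f w) by ring, abs_neg]
      exact hflip u w
    have hwd := weak_dual G hconn hxy hne (fun v => -(f v)) hψlip
    have hfy : f y - f x = n := by
      rw [← hdyx]
      exact (div_eq_one_iff_eq (by rw [hdyx]; exact hn0)).mp hfnorm
    have hlxy : graphLap G f x - graphLap G f y = n * r := by
      rw [hfr, mul_comm, div_mul_cancel₀ _ hn0]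
    have hψx : (fun v => -(f v)) x - (fun v => -(f v)) y = n := by
      dsimp only; linarith
    have hψL : graphLap G (fun v => -(f v)) x - graphLap G (fun v => -(f v)) y = -(n * r) := by
      rw [graphLap_neg, graphLap_neg, ← hlxy]; ring
    rw [hψx, hψL] at hwd
    unfold alphaRicci
    rw [← hndef, div_le_iff₀ (by linarith : (0:ℝ) < 1 - α)]
    have hWn : (n + (1 - α) * (-(n * r))) / n
        ≤ transportDist G (lazyWalk G α x) (lazyWalk G α y) / n :=
      (div_le_div_iff_of_pos_right hnpos).mpr hwd
    have hsimp : (n + (1 - α) * (-(n * r))) / n = 1 - (1 - α) * r := by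
      field_simp
      ring
    rw [hsimp] at hWn
    linarith
  rw [tendsto_order]
  constructor
  · -- hard direction
    intro l hl
    by_contra hcon
    rw [Filter.not_eventually] at hcon
    -- a sequence αₖ → 1⁻ along which the quotient stays ≤ l
    have hseq : ∀ k : ℕ, ∃ α : ℝ, (0 ≤ α ∧ 1 - 1/(k+1:ℝ) ≤ α ∧ α < 1) ∧
        alphaRicci G α x y / (1 - α) ≤ l := by
      intro k
      have hik : (0:ℝ) < 1/(k+1:ℝ) := by positivity
      have hak : max 0 (1 - 1/(k+1:ℝ)) < 1 := by
        apply max_lt one_pos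
        linarith
      have hIoo : Set.Ioo (max 0 (1 - 1/(k+1:ℝ))) 1 ∈ nhdsWithin (1:ℝ) (Set.Iio 1) :=
        Ioo_mem_nhdsLT_of_mem ⟨hak, le_refl 1⟩
      have hev : ∀ᶠ α in nhdsWithin (1:ℝ) (Set.Iio 1),
          (0 ≤ α ∧ 1 - 1/(k+1:ℝ) ≤ α ∧ α < 1) :=
        Filter.eventually_of_mem hIoo (fun α hα =>
          ⟨le_of_lt (lt_of_le_of_lt (le_max_left _ _) hα.1),
           le_of_lt (lt_of_le_of_lt (le_max_right _ _) hα.1), hα.2⟩)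
      obtain ⟨α, hα1, hα2⟩ := (hcon.and_eventually hev).exists
      exact ⟨α, hα2, not_lt.mp hα1⟩
    choose αs hαs using hseq
    have hαs0 : ∀ k, 0 ≤ αs k := fun k => (hαs k).1.1
    have hαslb : ∀ k : ℕ, 1 - 1/(k+1:ℝ) ≤ αs k := fun k => (hαs k).1.2.1
    have hαs1 : ∀ k, αs k < 1 := fun k => (hαs k).1.2.2
    have hαsle : ∀ k, alphaRicci G (αs k) x y / (1 - αs k) ≤ l := fun k => (hαs k).2
    have h1α : ∀ k, (0:ℝ) < 1 - αs k := fun k => by linarith [hαs1 k]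
    have hαsto : Filter.Tendsto αs Filter.atTop (nhds 1) := by
      apply tendsto_of_tendsto_of_tendsto_of_le_of_le
        (g := fun k : ℕ => 1 - 1/(k+1:ℝ)) (h := fun _ : ℕ => (1:ℝ)) ?_ tendsto_const_nhds
        hαslb (fun k => (hαs1 k).le)
      have h0 : Filter.Tendsto (fun k : ℕ => 1 / ((k : ℝ) + 1)) Filter.atTop (nhds 0) :=
        tendsto_one_div_add_atTop_nhds_zero_nat
      have h1 : Filter.Tendsto (fun _ : ℕ => (1:ℝ)) Filter.atTop (nhds 1) := tendsto_const_nhds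
      simpa using h1.sub h0
    -- dual optimizers for each k
    choose φs hφlip hφ0 hφA hφW using fun k => strong_dual G hconn hxy (hαs0 k) (hαs1 k)
    -- the identity for the curvature quotient
    have hform : ∀ k, alphaRicci G (αs k) x y / (1 - αs k)
        = (n - (φs k x - φs k y)) / (n * (1 - αs k))
          + (graphLap G (φs k) y - graphLap G (φs k) x) / n := by
      intro k
      have ha0 : (1:ℝ) - αs k ≠ 0 := ne_of_gt (h1α k)
      unfold alphaRicci
      rw [hφW k, ← hndef]
      field_simp
      ring
    have habsx : ∀ k, |graphLap G (φs k) x| ≤ 1 := fun k => abs_graphLap_le G (φs k) (hφlip k) hdx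
    have habsy : ∀ k, |graphLap G (φs k) y| ≤ 1 := fun k => abs_graphLap_le G (φs k) (hφlip k) hdy
    have hAnn : ∀ k, 0 ≤ n - (φs k x - φs k y) := by
      intro k
      have := le_trans (le_abs_self _) (hφlip k x y)
      rw [← hndef] at this
      linarith
    have hgap : ∀ k, n - (φs k x - φs k y) ≤ (n * l + 2) * (1 - αs k) := by
      intro k
      have h := hαsle k
      rw [hform k] at h
      have h2 : -(2/n) ≤ (graphLap G (φs k) y - graphLap G (φs k) x)/n := by
        have h2' : -2 ≤ graphLap G (φs k) y - graphLap G (φs k) x := by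
          have := abs_le.mp (habsx k)
          have := abs_le.mp (habsy k)
          linarith [(abs_le.mp (habsx k)).2, (abs_le.mp (habsy k)).1]
        calc -(2/n) = (-2)/n := by ring
          _ ≤ _ := (div_le_div_iff_of_pos_right hnpos).mpr h2'
      have h3 : (n - (φs k x - φs k y))/(n * (1 - αs k)) ≤ l + 2/n := by linarith
      have h4 : (0:ℝ) < n * (1 - αs k) := mul_pos hnpos (h1α k)
      rw [div_le_iff₀ h4] at h3
      calc n - (φs k x - φs k y) ≤ (l + 2/n) * (n * (1 - αs k)) := h3
        _ = (n * l + 2) * (1 - αs k) := by field_simp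
    have hlapk : ∀ k, (graphLap G (φs k) y - graphLap G (φs k) x)/n ≤ l := by
      intro k
      have h := hαsle k
      rw [hform k] at h
      have hA : 0 ≤ (n - (φs k x - φs k y))/(n * (1 - αs k)) :=
        div_nonneg (hAnn k) (le_of_lt (mul_pos hnpos (h1α k)))
      linarith
    -- compactness: extract a convergent subsequence of the restrictions to T
    set T : Finset V := insert x (insert y (G.neighborFinset x ∪ G.neighborFinset y)) with hTdef
    have hxT : x ∈ T := Finset.mem_insert_self x _
    have hyT : y ∈ T := Finset.mem_insert_of_mem (Finset.mem_insert_self y _)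
    have hΓxT : ∀ u, G.Adj x u → u ∈ T := by
      intro u hu
      apply Finset.mem_insert_of_mem
      apply Finset.mem_insert_of_mem
      exact Finset.mem_union_left _ ((SimpleGraph.mem_neighborFinset ..).mpr hu)
    have hΓyT : ∀ u, G.Adj y u → u ∈ T := by
      intro u hu
      apply Finset.mem_insert_of_mem
      apply Finset.mem_insert_of_mem
      exact Finset.mem_union_right _ ((SimpleGraph.mem_neighborFinset ..).mpr hu)
    have hKTc : IsCompact (Set.univ.pi (fun v : ↥T =>
        Set.Icc (-(G.dist (v:V) x : ℝ)) (G.dist (v:V) x : ℝ))) :=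
      isCompact_univ_pi (fun v => isCompact_Icc)
    have hmemKT : ∀ k, (fun v : ↥T => φs k (v : V)) ∈ Set.univ.pi (fun v : ↥T =>
        Set.Icc (-(G.dist (v:V) x : ℝ)) (G.dist (v:V) x : ℝ)) := by
      intro k v _
      have h := hφlip k (v:V) x
      rw [hφ0 k, sub_zero] at h
      exact Set.mem_Icc.mpr (abs_le.mp h)
    obtain ⟨gl, hglK, σ, hσmono, hσtend⟩ := hKTc.tendsto_subseq hmemKT
    set gE : V → ℝ := fun v => if h : v ∈ T then gl ⟨v, h⟩ else 0 with hgdef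
    have hptV : ∀ v, v ∈ T → Filter.Tendsto (fun k => φs (σ k) v) Filter.atTop (nhds (gE v)) := by
      intro v hv
      have h1 := tendsto_pi_nhds.mp hσtend ⟨v, hv⟩
      have h2 : gE v = gl ⟨v, hv⟩ := by rw [hgdef]; dsimp only; rw [dif_pos hv]
      rw [h2]
      exact h1
    have hLapT : ∀ w, w ∈ T → (∀ u, G.Adj w u → u ∈ T) →
        Filter.Tendsto (fun k => graphLap G (φs (σ k)) w) Filter.atTop
          (nhds (graphLap G gE w)) := by
      intro w hw hΓ
      unfold graphLap
      apply Filter.Tendsto.div_const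
      apply tendsto_finset_sum
      intro u hu
      have hadj : G.Adj w u := (SimpleGraph.mem_neighborFinset ..).mp hu
      exact (hptV u (hΓ u hadj)).sub (hptV w hw)
    have hσto1 : Filter.Tendsto (fun k => αs (σ k)) Filter.atTop (nhds 1) :=
      hαsto.comp hσmono.tendsto_atTop
    have hto0 : Filter.Tendsto (fun k => 1 - αs (σ k)) Filter.atTop (nhds 0) := by
      have h1 : Filter.Tendsto (fun _ : ℕ => (1:ℝ)) Filter.atTop (nhds 1) := tendsto_const_nhds
      simpa using h1.sub hσto1
    have hdiffto : Filter.Tendsto (fun k => φs (σ k) x - φs (σ k) y) Filter.atTop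
        (nhds (gE x - gE y)) := (hptV x hxT).sub (hptV y hyT)
    have hgxy : gE x - gE y = n := by
      have hlow : Filter.Tendsto (fun k => n - (n*l+2) * (1 - αs (σ k))) Filter.atTop
          (nhds n) := by
        have h0 : Filter.Tendsto (fun k => (n*l+2) * (1 - αs (σ k))) Filter.atTop (nhds 0) := by
          have := hto0.const_mul (n*l+2)
          simpa using this
        have h1 : Filter.Tendsto (fun _ : ℕ => n) Filter.atTop (nhds n) := tendsto_const_nhds
        simpa using h1.sub h0
      apply tendsto_nhds_unique hdiffto
      apply tendsto_of_tendsto_of_tendsto_of_le_of_le hlow tendsto_const_nhds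
      · intro k
        dsimp only
        linarith [hgap (σ k)]
      · intro k
        dsimp only
        linarith [hAnn (σ k)]
    have hlaptend : Filter.Tendsto
        (fun k => (graphLap G (φs (σ k)) y - graphLap G (φs (σ k)) x)/n) Filter.atTop
        (nhds ((graphLap G gE y - graphLap G gE x)/n)) :=
      ((hLapT y hyT hΓyT).sub (hLapT x hxT hΓxT)).div_const n
    have hfinal_le : (graphLap G gE y - graphLap G gE x)/n ≤ l :=
      le_of_tendsto hlaptend (Filter.Eventually.of_forall (fun k => hlapk (σ k)))
    -- extend the limit function and produce an element of S below l
    have hglip : ∀ u ∈ T, ∀ w ∈ T, gE u - gE w ≤ (G.dist u w : ℝ) := by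
      intro u hu w hw
      apply le_of_tendsto ((hptV u hu).sub (hptV w hw))
      apply Filter.Eventually.of_forall
      intro k
      exact le_trans (le_abs_self _) (hφlip (σ k) u w)
    obtain ⟨Ψ, hΨT, hΨlip⟩ := mcshane G hconn T ⟨x, hxT⟩ gE hglip
    have hΨx : Ψ x = gE x := hΨT x hxT
    have hΨy : Ψ y = gE y := hΨT y hyT
    have hmemS : ((graphLap G (fun v => -(Ψ v)) x - graphLap G (fun v => -(Ψ v)) y) / n) ∈ S := by
      rw [hSdef]
      refine ⟨(fun v => -(Ψ v)), ?_, ?_, rfl⟩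
      · intro u w
        dsimp only
        rw [show -(Ψ u) - -(Ψ w) = -(Ψ u - Ψ w) by ring, abs_neg]
        exact hΨlip u w
      · dsimp only
        rw [show -(Ψ y) - -(Ψ x) = Ψ x - Ψ y by ring, hΨx, hΨy, hgxy, hdyx]
        exact div_self hn0
    have hrel : (graphLap G (fun v => -(Ψ v)) x - graphLap G (fun v => -(Ψ v)) y) / n
        = (graphLap G gE y - graphLap G gE x)/n := by
      rw [graphLap_neg, graphLap_neg]
      have hx' : graphLap G Ψ x = graphLap G gE x :=
        graphLap_congr G hΨx (fun u hu => hΨT u (hΓxT u hu))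
      have hy' : graphLap G Ψ y = graphLap G gE y :=
        graphLap_congr G hΨy (fun u hu => hΨT u (hΓyT u hu))
      rw [hx', hy']
      ring
    have hcontr : sInf S ≤ (graphLap G gE y - graphLap G gE x)/n := by
      rw [← hrel]
      exact csInf_le hSbdd hmemS
    linarith
  · -- easy direction
    intro u hu
    have hIoo : Set.Ioo (0:ℝ) 1 ∈ nhdsWithin (1:ℝ) (Set.Iio 1) :=
      Ioo_mem_nhdsLT_of_mem ⟨zero_lt_one, le_refl 1⟩
    apply Filter.eventually_of_mem hIoo
    intro α hα
    have h := le_csInf hSne (fun r hr => hupper α hα.1.le hα.2 r hr)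
    linarith
end

section
/- Let G = (V,E) be a locally finite graph, let x and y be adjacent vertices, and let p ∈ [0,1]. Then there exists a 1-Lipschitz function φ:V→ℝ taking only integer values such that W(m_x^p, m_y^p) = Σ_{w∈V} φ(w)(m_x^p(w) − m_y^p(w)). -/
open Filter Set

variable {V : Type*}

namespace IVPAux

noncomputable def dd (G : SimpleGraph V) (u v : V) : ℝ := (G.dist u v : ℝ)

lemma dd_nonneg (G : SimpleGraph V) (u v : V) : 0 ≤ dd G u v := by simp [dd]

lemma dd_comm (G : SimpleGraph V) (u v : V) : dd G u v = dd G v u := by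
  simp [dd, SimpleGraph.dist_comm]

lemma dd_self (G : SimpleGraph V) (u : V) : dd G u u = 0 := by simp [dd]

lemma dist_tri {G : SimpleGraph V} {u v w : V} (h1 : G.Reachable u v) (h2 : G.Reachable v w) :
    dd G u w ≤ dd G u v + dd G v w := by
  obtain ⟨p, hp⟩ := h1.exists_walk_length_eq_dist
  obtain ⟨q, hq⟩ := h2.exists_walk_length_eq_dist
  have := SimpleGraph.dist_le (p.append q)
  rw [SimpleGraph.Walk.length_append, hp, hq] at this
  unfold dd
  exact_mod_cast this

noncomputable def sumd (G : SimpleGraph V) : List (V × V) → ℝ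
  | [] => 0
  | q :: L => dd G q.1 q.2 + sumd G L

noncomputable def core (G : SimpleGraph V) : List (V × V) → ℝ
  | [] => 0
  | [_] => 0
  | q :: q' :: L => dd G q.2 q'.1 + core G (q' :: L)

def endp : V → List (V × V) → V
  | src, [] => src
  | _, q :: L => endp q.2 L

noncomputable def entry (G : SimpleGraph V) : V → List (V × V) → ℝ
  | _, [] => 0
  | src, q :: _ => dd G src q.1

noncomputable def cval (G : SimpleGraph V) (src : V) (L : List (V × V)) (v : V) : ℝ :=
  sumd G L - entry G src L - core G L - dd G (endp src L) v

lemma core_bridge (G : SimpleGraph V) (q : V × V) (M : List (V × V)) :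
    core G (q :: M) = entry G q.2 M + core G M := by
  cases M with
  | nil => simp [core, entry]
  | cons q' M' => simp [core, entry]

lemma cval_cons (G : SimpleGraph V) (src : V) (q : V × V) (M : List (V × V)) (v : V) :
    cval G src (q :: M) v = dd G q.1 q.2 - dd G src q.1 + cval G q.2 M v := by
  unfold cval
  rw [core_bridge]
  show dd G q.1 q.2 + sumd G M - dd G src q.1 - _ - dd G (endp q.2 M) v = _
  ring

lemma cval_nil (G : SimpleGraph V) (src v : V) : cval G src [] v = -dd G src v := by
  simp [cval, sumd, entry, core, endp]

lemma cval_lip {G : SimpleGraph V} {x : V} (L : List (V × V))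
    (hL : ∀ q ∈ L, G.Reachable x q.2) :
    ∀ src : V, G.Reachable x src → ∀ u v : V, G.Reachable x u → G.Reachable x v →
      cval G src L u - dd G u v ≤ cval G src L v := by
  induction L with
  | nil =>
    intro src hsrc u v hu hv
    rw [cval_nil, cval_nil]
    have := dist_tri (G := G) (hsrc.symm.trans hu) (hu.symm.trans hv)
    linarith
  | cons q M ih =>
    intro src hsrc u v hu hv
    rw [cval_cons, cval_cons]
    have := ih (fun q' h => hL q' (by simp [h])) q.2 (hL q (by simp)) u v hu hv
    linarith

lemma cval_ext (G : SimpleGraph V) (q : V × V) :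
    ∀ (L : List (V × V)) (src : V), cval G src (L ++ [q]) q.2 = cval G src L q.1 + dd G q.1 q.2 := by
  intro L
  induction L with
  | nil =>
    intro src
    rw [List.nil_append, cval_nil]
    rw [show cval G src [q] q.2 = dd G q.1 q.2 - dd G src q.1 + cval G q.2 [] q.2 from
      cval_cons G src q [] q.2, cval_nil, dd_self]
    ring
  | cons q' M ih =>
    intro src
    rw [List.cons_append, cval_cons, cval_cons, ih]
    ring

lemma cval_split (G : SimpleGraph V) (a b : V) (Q : List (V × V)) :
    ∀ (P : List (V × V)) (x : V),
      cval G x (P ++ (a, b) :: Q) a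
        = cval G x (P ++ [(a, b)]) b
          + (dd G a b + sumd G Q - entry G b Q - core G Q - dd G (endp b Q) a)
          - dd G a b := by
  intro P
  induction P with
  | nil =>
    intro x
    simp only [List.nil_append]
    rw [cval_cons, cval_cons]
    unfold cval
    simp [sumd, entry, core, endp, dd_self]
    ring
  | cons q' M ih =>
    intro x
    rw [List.cons_append, List.cons_append, cval_cons, cval_cons, ih]
    ring

lemma cval_int (G : SimpleGraph V) :
    ∀ (L : List (V × V)) (src v : V), ∃ n : ℤ, cval G src L v = (n : ℝ) := by
  intro L
  induction L with
  | nil => intro src v; exact ⟨-(G.dist src v : ℤ), by rw [cval_nil]; push_cast [dd]; ring⟩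
  | cons q M ih =>
    intro src v
    obtain ⟨n, hn⟩ := ih q.2 v
    exact ⟨(G.dist q.1 q.2 : ℤ) - (G.dist src q.1 : ℤ) + n,
      by rw [cval_cons, hn]; push_cast [dd]; ring⟩

open Classical in
noncomputable def pert (first : V) : List (V × V) → V → V → ℝ
  | [], _, _ => 0
  | [q], u, v => (if u = first ∧ v = q.2 then 1 else 0) - (if u = q.1 ∧ v = q.2 then 1 else 0)
  | q :: q' :: L, u, v =>
      (if u = q'.1 ∧ v = q.2 then 1 else 0) - (if u = q.1 ∧ v = q.2 then 1 else 0)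
      + pert first (q' :: L) u v

noncomputable def connBack (G : SimpleGraph V) (first : V) : List (V × V) → ℝ
  | [] => 0
  | [q] => dd G first q.2
  | q :: q' :: L => dd G q'.1 q.2 + connBack G first (q' :: L)

lemma connBack_eq (G : SimpleGraph V) (w : V) :
    ∀ (L : List (V × V)) (q : V × V),
      connBack G w (q :: L) = core G (q :: L) + dd G (endp q.2 L) w := by
  intro L
  induction L with
  | nil => intro q; simp [connBack, core, endp, dd_comm]
  | cons q' M ih =>
    intro q
    show dd G q'.1 q.2 + connBack G w (q' :: M)
        = dd G q.2 q'.1 + core G (q' :: M) + dd G (endp q'.2 M) w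
    rw [ih q', dd_comm G q.2 q'.1]
    ring

open Classical in
noncomputable def cnt (u v : V) (L : List (V × V)) : ℝ :=
  (L.map fun q => if (u, v) = q then (1 : ℝ) else 0).sum

lemma cnt_nonneg (u v : V) (L : List (V × V)) : 0 ≤ cnt u v L := by
  classical
  unfold cnt
  induction L with
  | nil => simp
  | cons q M ih =>
    simp only [List.map_cons, List.sum_cons]
    have : (0:ℝ) ≤ if (u, v) = q then (1:ℝ) else 0 := by positivity
    linarith

lemma cnt_le_length (u v : V) (L : List (V × V)) : cnt u v L ≤ (L.length : ℝ) := by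
  classical
  unfold cnt
  induction L with
  | nil => simp
  | cons q M ih =>
    simp only [List.map_cons, List.sum_cons, List.length_cons]
    have : (if (u, v) = q then (1:ℝ) else 0) ≤ 1 := by split <;> norm_num
    push_cast
    linarith

lemma cnt_eq_zero {u v : V} {L : List (V × V)} (h : (u, v) ∉ L) : cnt u v L = 0 := by
  classical
  unfold cnt
  induction L with
  | nil => simp
  | cons q M ih =>
    simp only [List.map_cons, List.sum_cons]
    rw [if_neg (by intro hq; exact h (hq ▸ (List.mem_cons_self : q ∈ q :: M))),
      ih (fun hm => h (List.mem_cons_of_mem q hm))]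
    ring

open Classical in
lemma pert_ge (first : V) : ∀ (L : List (V × V)) (u v : V),
    -(cnt u v L) ≤ pert first L u v := by
  intro L
  induction L with
  | nil => intro u v; simp [pert, cnt]
  | cons q M ih =>
    intro u v
    cases M with
    | nil =>
      show -(cnt u v [q]) ≤ (if u = first ∧ v = q.2 then (1:ℝ) else 0)
          - (if u = q.1 ∧ v = q.2 then 1 else 0)
      have h1 : (0:ℝ) ≤ if u = first ∧ v = q.2 then (1:ℝ) else 0 := by positivity
      have h2 : (if u = q.1 ∧ v = q.2 then (1:ℝ) else 0) ≤ cnt u v [q] := by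
        unfold cnt
        simp only [List.map_cons, List.map_nil, List.sum_cons, List.sum_nil, add_zero]
        have : (u = q.1 ∧ v = q.2) ↔ (u, v) = q := by
          constructor
          · rintro ⟨h1, h2⟩; exact Prod.ext h1 h2
          · intro h; exact ⟨congrArg Prod.fst h, congrArg Prod.snd h⟩
        split <;> split <;> simp_all
      linarith
    | cons q' M' =>
      show -(cnt u v (q :: q' :: M')) ≤ (if u = q'.1 ∧ v = q.2 then (1:ℝ) else 0)
          - (if u = q.1 ∧ v = q.2 then 1 else 0) + pert first (q' :: M') u v
      have h1 : (0:ℝ) ≤ if u = q'.1 ∧ v = q.2 then (1:ℝ) else 0 := by positivity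
      have h2 : (if u = q.1 ∧ v = q.2 then (1:ℝ) else 0)
          ≤ if (u, v) = q then (1:ℝ) else 0 := by
        have : (u = q.1 ∧ v = q.2) ↔ (u, v) = q := by
          constructor
          · rintro ⟨h1, h2⟩; exact Prod.ext h1 h2
          · intro h; exact ⟨congrArg Prod.fst h, congrArg Prod.snd h⟩
        split <;> split <;> simp_all
      have h3 := ih u v
      have h4 : cnt u v (q :: q' :: M') = (if (u, v) = q then (1:ℝ) else 0) + cnt u v (q' :: M') := by
        unfold cnt; simp
      linarith

open Classical in
lemma pert_supp (first : V) {s : Finset V} (hfirst : first ∈ s) :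
    ∀ (L : List (V × V)), (∀ q ∈ L, q.1 ∈ s ∧ q.2 ∈ s) →
      ∀ u v : V, pert first L u v ≠ 0 → u ∈ s ∧ v ∈ s := by
  intro L
  induction L with
  | nil => intro _ u v h; simp [pert] at h
  | cons q M ih =>
    intro hmem u v h
    cases M with
    | nil =>
      by_cases h1 : u = first ∧ v = q.2
      · exact ⟨h1.1 ▸ hfirst, h1.2 ▸ (hmem q (by simp)).2⟩
      by_cases h2 : u = q.1 ∧ v = q.2
      · exact ⟨h2.1 ▸ (hmem q (by simp)).1, h2.2 ▸ (hmem q (by simp)).2⟩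
      · exfalso; apply h; show (if u = first ∧ v = q.2 then (1:ℝ) else 0) - _ = 0
        rw [if_neg h1, if_neg h2]; ring
    | cons q' M' =>
      by_cases h1 : u = q'.1 ∧ v = q.2
      · exact ⟨h1.1 ▸ (hmem q' (by simp)).1, h1.2 ▸ (hmem q (by simp)).2⟩
      by_cases h2 : u = q.1 ∧ v = q.2
      · exact ⟨h2.1 ▸ (hmem q (by simp)).1, h2.2 ▸ (hmem q (by simp)).2⟩
      · refine ih (fun q hq => hmem q (List.mem_cons_of_mem _ hq)) u v ?_
        intro h0; apply h
        show (if u = q'.1 ∧ v = q.2 then (1:ℝ) else 0) - _ + pert first (q' :: M') u v = 0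
        rw [if_neg h1, if_neg h2, h0]; ring

open Classical in
lemma sum_ind_right (s : Finset V) (c : Prop) (b : V) (hb : b ∈ s) :
    ∑ v ∈ s, (if c ∧ v = b then (1:ℝ) else 0) = if c then 1 else 0 := by
  by_cases h : c
  · simp [h, Finset.sum_ite_eq' s b (fun _ => (1:ℝ)), hb]
  · simp [h]

open Classical in
lemma sum_ind_left (s : Finset V) (c : Prop) (a : V) (ha : a ∈ s) :
    ∑ u ∈ s, (if u = a ∧ c then (1:ℝ) else 0) = if c then 1 else 0 := by
  by_cases h : c
  · simp [h, Finset.sum_ite_eq' s a (fun _ => (1:ℝ)), ha]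
  · simp [h]

open Classical in
lemma sum_ind_pair (s : Finset V) (a b : V) (ha : a ∈ s) (hb : b ∈ s) (f : V → V → ℝ) :
    ∑ q ∈ s ×ˢ s, (if q.1 = a ∧ q.2 = b then (1:ℝ) else 0) * f q.1 q.2 = f a b := by
  have key : ∀ q ∈ s ×ˢ s,
      (if q.1 = a ∧ q.2 = b then (1:ℝ) else 0) * f q.1 q.2
        = if q = (a, b) then f q.1 q.2 else 0 := by
    intro q _
    by_cases h : q = (a, b)
    · subst h; simp
    · rw [if_neg h, if_neg fun hc => h (Prod.ext hc.1 hc.2), zero_mul]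
  rw [Finset.sum_congr rfl key, Finset.sum_ite_eq' (s ×ˢ s) (a, b)]
  simp [Finset.mem_product, ha, hb]

open Classical in
lemma pert_row {first : V} {s : Finset V} :
    ∀ (L : List (V × V)) (q₀ : V × V), (∀ q ∈ q₀ :: L, q.1 ∈ s ∧ q.2 ∈ s) →
      ∀ u : V, ∑ v ∈ s, pert first (q₀ :: L) u v
        = (if u = first then 1 else 0) - (if u = q₀.1 then 1 else 0) := by
  intro L
  induction L with
  | nil =>
    intro q₀ hmem u
    show ∑ v ∈ s, ((if u = first ∧ v = q₀.2 then (1:ℝ) else 0)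
        - (if u = q₀.1 ∧ v = q₀.2 then 1 else 0)) = _
    rw [Finset.sum_sub_distrib, sum_ind_right s _ _ (hmem q₀ (by simp)).2,
      sum_ind_right s _ _ (hmem q₀ (by simp)).2]
  | cons q' M ih =>
    intro q₀ hmem u
    show ∑ v ∈ s, ((if u = q'.1 ∧ v = q₀.2 then (1:ℝ) else 0)
        - (if u = q₀.1 ∧ v = q₀.2 then 1 else 0) + pert first (q' :: M) u v) = _
    rw [Finset.sum_add_distrib, Finset.sum_sub_distrib,
      sum_ind_right s _ _ (hmem q₀ (by simp)).2, sum_ind_right s _ _ (hmem q₀ (by simp)).2,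
      ih q' (fun q hq => hmem q (List.mem_cons_of_mem _ hq)) u]
    ring

open Classical in
lemma pert_col {first : V} {s : Finset V} (hfirst : first ∈ s) :
    ∀ (L : List (V × V)) (q₀ : V × V), (∀ q ∈ q₀ :: L, q.1 ∈ s ∧ q.2 ∈ s) →
      ∀ v : V, ∑ u ∈ s, pert first (q₀ :: L) u v = 0 := by
  intro L
  induction L with
  | nil =>
    intro q₀ hmem v
    show ∑ u ∈ s, ((if u = first ∧ v = q₀.2 then (1:ℝ) else 0)
        - (if u = q₀.1 ∧ v = q₀.2 then 1 else 0)) = _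
    rw [Finset.sum_sub_distrib, sum_ind_left s _ _ hfirst,
      sum_ind_left s _ _ (hmem q₀ (by simp)).1]
    ring
  | cons q' M ih =>
    intro q₀ hmem v
    show ∑ u ∈ s, ((if u = q'.1 ∧ v = q₀.2 then (1:ℝ) else 0)
        - (if u = q₀.1 ∧ v = q₀.2 then 1 else 0) + pert first (q' :: M) u v) = _
    rw [Finset.sum_add_distrib, Finset.sum_sub_distrib,
      sum_ind_left s _ _ (hmem q' (by simp)).1, sum_ind_left s _ _ (hmem q₀ (by simp)).1,
      ih q' (fun q hq => hmem q (List.mem_cons_of_mem _ hq)) v]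
    ring

open Classical in
lemma pert_cost (G : SimpleGraph V) {first : V} {s : Finset V} (hfirst : first ∈ s) :
    ∀ (L : List (V × V)) (q₀ : V × V), (∀ q ∈ q₀ :: L, q.1 ∈ s ∧ q.2 ∈ s) →
      ∑ q ∈ s ×ˢ s, pert first (q₀ :: L) q.1 q.2 * dd G q.1 q.2
        = connBack G first (q₀ :: L) - sumd G (q₀ :: L) := by
  intro L
  induction L with
  | nil =>
    intro q₀ hmem
    have e : ∀ q ∈ s ×ˢ s, pert first [q₀] q.1 q.2 * dd G q.1 q.2
        = (if q.1 = first ∧ q.2 = q₀.2 then (1:ℝ) else 0) * dd G q.1 q.2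
          - (if q.1 = q₀.1 ∧ q.2 = q₀.2 then (1:ℝ) else 0) * dd G q.1 q.2 := by
      intro q _
      show ((if q.1 = first ∧ q.2 = q₀.2 then (1:ℝ) else 0)
        - (if q.1 = q₀.1 ∧ q.2 = q₀.2 then 1 else 0)) * dd G q.1 q.2 = _
      ring
    rw [Finset.sum_congr rfl e, Finset.sum_sub_distrib,
      sum_ind_pair s _ _ hfirst (hmem q₀ (by simp)).2,
      sum_ind_pair s _ _ (hmem q₀ (by simp)).1 (hmem q₀ (by simp)).2]
    show _ = dd G first q₀.2 - (dd G q₀.1 q₀.2 + 0)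
    ring
  | cons q' M ih =>
    intro q₀ hmem
    have e : ∀ q ∈ s ×ˢ s, pert first (q₀ :: q' :: M) q.1 q.2 * dd G q.1 q.2
        = (if q.1 = q'.1 ∧ q.2 = q₀.2 then (1:ℝ) else 0) * dd G q.1 q.2
          - (if q.1 = q₀.1 ∧ q.2 = q₀.2 then (1:ℝ) else 0) * dd G q.1 q.2
          + pert first (q' :: M) q.1 q.2 * dd G q.1 q.2 := by
      intro q _
      show ((if q.1 = q'.1 ∧ q.2 = q₀.2 then (1:ℝ) else 0)
        - (if q.1 = q₀.1 ∧ q.2 = q₀.2 then 1 else 0)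
        + pert first (q' :: M) q.1 q.2) * dd G q.1 q.2 = _
      ring
    rw [Finset.sum_congr rfl e, Finset.sum_add_distrib, Finset.sum_sub_distrib,
      sum_ind_pair s _ _ (hmem q' (by simp)).1 (hmem q₀ (by simp)).2,
      sum_ind_pair s _ _ (hmem q₀ (by simp)).1 (hmem q₀ (by simp)).2,
      ih q' (fun q hq => hmem q (List.mem_cons_of_mem _ hq))]
    show _ = dd G q'.1 q₀.2 + connBack G first (q' :: M) - (dd G q₀.1 q₀.2 + sumd G (q' :: M))
    ring

/-- The finite-support reformulation of `IsCoupling`. -/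
def FC (s : Finset V) (m₁ m₂ : V → ℝ) (A : V → V → ℝ) : Prop :=
  (∀ u v, 0 ≤ A u v) ∧ (∀ u v, A u v ≠ 0 → u ∈ s ∧ v ∈ s) ∧
  (∀ u, ∑ v ∈ s, A u v = m₁ u) ∧ (∀ v, ∑ u ∈ s, A u v = m₂ v)

noncomputable def cost (G : SimpleGraph V) (s : Finset V) (A : V → V → ℝ) : ℝ :=
  ∑ q ∈ s ×ˢ s, A q.1 q.2 * dd G q.1 q.2

end IVPAux
section Bridge

open IVPAux

variable {G : SimpleGraph V} {s : Finset V} {m₁ m₂ : V → ℝ} {A : V → V → ℝ}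

lemma m_le_one (h0 : ∀ u, 0 ≤ m₁ u) (hs : ∀ u, m₁ u ≠ 0 → u ∈ s)
    (h1 : ∑ u ∈ s, m₁ u = 1) : ∀ u, m₁ u ≤ 1 := by
  intro u
  by_cases hz : m₁ u = 0
  · rw [hz]; norm_num
  · calc m₁ u ≤ ∑ u' ∈ s, m₁ u' := Finset.single_le_sum (fun i _ => h0 i) (hs u hz)
    _ = 1 := h1

lemma isCoupling_to_FC (hc : IsCoupling m₁ m₂ A)
    (h1s : ∀ u, m₁ u ≠ 0 → u ∈ s) (h2s : ∀ u, m₂ u ≠ 0 → u ∈ s) :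
    FC s m₁ m₂ A ∧ (∑ᶠ p : V × V, A p.1 p.2 * (G.dist p.1 p.2 : ℝ)) = cost G s A := by
  obtain ⟨hfin, hbnd, hrow, hcol⟩ := hc
  have hrowfin : ∀ u, (Function.support fun v => A u v).Finite := fun u =>
    (hfin.image Prod.snd).subset (fun v hv => ⟨(u, v), hv, rfl⟩)
  have hcolfin : ∀ v, (Function.support fun u => A u v).Finite := fun v =>
    (hfin.image Prod.fst).subset (fun u hu => ⟨(u, v), hu, rfl⟩)
  have hsupp : ∀ u v, A u v ≠ 0 → u ∈ s ∧ v ∈ s := by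
    intro u v hne
    have hpos : 0 < A u v := lt_of_le_of_ne (hbnd u v).1 (Ne.symm hne)
    constructor
    · apply h1s
      rw [← hrow u]
      have h := single_le_finsum v (hrowfin u) (fun j => (hbnd u j).1)
      exact ne_of_gt (lt_of_lt_of_le hpos h)
    · apply h2s
      rw [← hcol v]
      have h := single_le_finsum u (hcolfin v) (fun j => (hbnd j v).1)
      exact ne_of_gt (lt_of_lt_of_le hpos h)
  have hrow' : ∀ u, ∑ v ∈ s, A u v = m₁ u := by
    intro u
    rw [← hrow u]
    exact (finsum_eq_sum_of_support_subset _ (fun v hv => (hsupp u v hv).2)).symm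
  have hcol' : ∀ v, ∑ u ∈ s, A u v = m₂ v := by
    intro v
    rw [← hcol v]
    exact (finsum_eq_sum_of_support_subset _ (fun u hu => (hsupp u v hu).1)).symm
  refine ⟨⟨fun u v => (hbnd u v).1, hsupp, hrow', hcol'⟩, ?_⟩
  apply finsum_eq_sum_of_support_subset
  intro q hq
  have hne : A q.1 q.2 ≠ 0 := by
    intro h0
    apply hq
    show A q.1 q.2 * _ = 0
    rw [h0, zero_mul]
  rw [Finset.coe_product]
  exact ⟨(hsupp q.1 q.2 hne).1, (hsupp q.1 q.2 hne).2⟩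

lemma FC_le_one (hA : FC s m₁ m₂ A)
    (h10 : ∀ u, 0 ≤ m₁ u) (h1s : ∀ u, m₁ u ≠ 0 → u ∈ s) (h11 : ∑ u ∈ s, m₁ u = 1) :
    ∀ u v, A u v ≤ 1 := by
  obtain ⟨h0, hsupp, hrow, hcol⟩ := hA
  intro u v
  by_cases hv : v ∈ s
  · calc A u v ≤ ∑ v' ∈ s, A u v' := Finset.single_le_sum (fun i _ => h0 u i) hv
    _ = m₁ u := hrow u
    _ ≤ 1 := m_le_one h10 h1s h11 u
  · have : A u v = 0 := by
      by_contra hne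
      exact hv (hsupp u v hne).2
    rw [this]; norm_num

lemma FC_to_isCoupling (hA : FC s m₁ m₂ A)
    (h10 : ∀ u, 0 ≤ m₁ u) (h1s : ∀ u, m₁ u ≠ 0 → u ∈ s) (h11 : ∑ u ∈ s, m₁ u = 1) :
    IsCoupling m₁ m₂ A ∧ (∑ᶠ p : V × V, A p.1 p.2 * (G.dist p.1 p.2 : ℝ)) = cost G s A := by
  obtain ⟨h0, hsupp, hrow, hcol⟩ := hA
  have hle : ∀ u v, A u v ≤ 1 := by
    intro u v
    by_cases hv : v ∈ s
    · calc A u v ≤ ∑ v' ∈ s, A u v' := Finset.single_le_sum (fun i _ => h0 u i) hv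
      _ = m₁ u := hrow u
      _ ≤ 1 := m_le_one h10 h1s h11 u
    · have : A u v = 0 := by
        by_contra hne
        exact hv (hsupp u v hne).2
      rw [this]; norm_num
  have hfin : (Function.support fun p : V × V => A p.1 p.2).Finite := by
    apply (s ×ˢ s).finite_toSet.subset
    intro q hq
    rw [Finset.coe_product]
    exact ⟨(hsupp q.1 q.2 hq).1, (hsupp q.1 q.2 hq).2⟩
  have hrowf : ∀ u, ∑ᶠ v, A u v = m₁ u := by
    intro u
    rw [← hrow u]
    exact finsum_eq_sum_of_support_subset _ (fun v hv => (hsupp u v hv).2)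
  have hcolf : ∀ v, ∑ᶠ u, A u v = m₂ v := by
    intro v
    rw [← hcol v]
    exact finsum_eq_sum_of_support_subset _ (fun u hu => (hsupp u v hu).1)
  refine ⟨⟨hfin, fun u v => ⟨h0 u v, hle u v⟩, hrowf, hcolf⟩, ?_⟩
  apply finsum_eq_sum_of_support_subset
  intro q hq
  have hne : A q.1 q.2 ≠ 0 := by
    intro h0'
    apply hq
    show A q.1 q.2 * _ = 0
    rw [h0', zero_mul]
  rw [Finset.coe_product]
  exact ⟨(hsupp q.1 q.2 hne).1, (hsupp q.1 q.2 hne).2⟩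

end Bridge
section MinKey

open IVPAux

variable {G : SimpleGraph V} {s : Finset V} {m₁ m₂ : V → ℝ}

lemma transport_eq (h10 : ∀ u, 0 ≤ m₁ u) (h1s : ∀ u, m₁ u ≠ 0 → u ∈ s)
    (h11 : ∑ u ∈ s, m₁ u = 1) (h2s : ∀ u, m₂ u ≠ 0 → u ∈ s) :
    {w : ℝ | ∃ A : V → V → ℝ, IsCoupling m₁ m₂ A ∧
        w = ∑ᶠ p : V × V, A p.1 p.2 * (G.dist p.1 p.2 : ℝ)}
      = cost G s '' {A | FC s m₁ m₂ A} := by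
  ext w
  constructor
  · rintro ⟨A, hc, rfl⟩
    obtain ⟨hFC, he⟩ := isCoupling_to_FC (G := G) hc h1s h2s
    exact ⟨A, hFC, he.symm⟩
  · rintro ⟨A, hFC, rfl⟩
    obtain ⟨hc, he⟩ := FC_to_isCoupling (G := G) hFC h10 h1s h11
    exact ⟨A, hc, he.symm⟩

lemma exists_min (h10 : ∀ u, 0 ≤ m₁ u) (h1s : ∀ u, m₁ u ≠ 0 → u ∈ s)
    (h11 : ∑ u ∈ s, m₁ u = 1) (hne : ∃ A, FC s m₁ m₂ A) :
    ∃ A, FC s m₁ m₂ A ∧ ∀ B, FC s m₁ m₂ B → cost G s A ≤ cost G s B := by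
  classical
  have hev : ∀ u v : V, Continuous fun A : V → V → ℝ => A u v := fun u v =>
    (continuous_apply v).comp (continuous_apply u)
  set box : V → V → Set ℝ := fun u v => if u ∈ s ∧ v ∈ s then Set.Icc (0:ℝ) 1 else {0}
    with hbox
  have hboxc : ∀ u v, IsCompact (box u v) := by
    intro u v
    rw [hbox]
    dsimp only
    split_ifs
    · exact isCompact_Icc
    · exact isCompact_singleton
  have hC₀ : IsCompact (Set.univ.pi fun u => Set.univ.pi fun v => box u v) :=
    isCompact_univ_pi fun u => isCompact_univ_pi fun v => hboxc u v
  have hK₂ : IsClosed {A : V → V → ℝ |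
      (∀ u, ∑ v ∈ s, A u v = m₁ u) ∧ (∀ v, ∑ u ∈ s, A u v = m₂ v)} := by
    have he : {A : V → V → ℝ | (∀ u, ∑ v ∈ s, A u v = m₁ u) ∧ (∀ v, ∑ u ∈ s, A u v = m₂ v)}
        = (⋂ u, {A : V → V → ℝ | ∑ v ∈ s, A u v = m₁ u})
          ∩ ⋂ v, {A : V → V → ℝ | ∑ u ∈ s, A u v = m₂ v} := by
      ext A
      simp [Set.mem_iInter]
    rw [he]
    apply IsClosed.inter
    · exact isClosed_iInter fun u =>
        isClosed_eq (continuous_finset_sum _ fun v _ => hev u v) continuous_const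
    · exact isClosed_iInter fun v =>
        isClosed_eq (continuous_finset_sum _ fun u _ => hev u v) continuous_const
  have hKeq : {A : V → V → ℝ | FC s m₁ m₂ A}
      = (Set.univ.pi fun u => Set.univ.pi fun v => box u v)
        ∩ {A : V → V → ℝ | (∀ u, ∑ v ∈ s, A u v = m₁ u) ∧ (∀ v, ∑ u ∈ s, A u v = m₂ v)} := by
    ext A
    constructor
    · intro hA
      refine ⟨?_, hA.2.2.1, hA.2.2.2⟩
      intro u _
      intro v _
      rw [hbox]
      dsimp only
      split_ifs with h
      · exact ⟨hA.1 u v, FC_le_one hA h10 h1s h11 u v⟩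
      · by_contra hne'
        exact h (hA.2.1 u v hne')
    · rintro ⟨hC, hrow, hcol⟩
      have hbnd : ∀ u v, A u v ∈ box u v := fun u v =>
        hC u (Set.mem_univ u) v (Set.mem_univ v)
      refine ⟨?_, ?_, hrow, hcol⟩
      · intro u v
        have := hbnd u v
        rw [hbox] at this
        dsimp only at this
        split_ifs at this with h
        · exact this.1
        · rw [Set.mem_singleton_iff] at this
          rw [this]
      · intro u v hne'
        have := hbnd u v
        rw [hbox] at this
        dsimp only at this
        split_ifs at this with h
        · exact h
        · rw [Set.mem_singleton_iff] at this
          exact absurd this hne'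
  have hK : IsCompact {A : V → V → ℝ | FC s m₁ m₂ A} := by
    rw [hKeq]
    exact hC₀.inter_right hK₂
  have hcont : Continuous (cost G s) :=
    continuous_finset_sum _ fun q _ => (hev q.1 q.2).mul continuous_const
  obtain ⟨A, hAK, hmin⟩ := hK.exists_isMinOn hne hcont.continuousOn
  exact ⟨A, hAK, fun B hB => hmin hB⟩

lemma key_lemma {A : V → V → ℝ} (hA : FC s m₁ m₂ A)
    (hmin : ∀ B, FC s m₁ m₂ B → cost G s A ≤ cost G s B)
    (L : List (V × V)) (q₀ : V × V)
    (hmem : ∀ q ∈ q₀ :: L, A q.1 q.2 ≠ 0 ∧ q.1 ∈ s ∧ q.2 ∈ s) :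
    sumd G (q₀ :: L) ≤ connBack G q₀.1 (q₀ :: L) := by
  classical
  have hTne : ((q₀ :: L).toFinset.image fun q => A q.1 q.2).Nonempty :=
    ⟨A q₀.1 q₀.2, Finset.mem_image.2 ⟨q₀, by simp, rfl⟩⟩
  set μ : ℝ := ((q₀ :: L).toFinset.image fun q => A q.1 q.2).min' hTne with hμ
  have hminle : ∀ q ∈ q₀ :: L, μ ≤ A q.1 q.2 := fun q hq =>
    Finset.min'_le _ _ (Finset.mem_image.2 ⟨q, List.mem_toFinset.2 hq, rfl⟩)
  have hminpos : 0 < μ := by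
    obtain ⟨q, hq, he⟩ := Finset.mem_image.1 (Finset.min'_mem _ hTne)
    rw [hμ, ← he]
    exact lt_of_le_of_ne (hA.1 q.1 q.2) (Ne.symm (hmem q (List.mem_toFinset.1 hq)).1)
  have hlen : 0 < ((q₀ :: L).length : ℝ) := by
    simp only [List.length_cons]
    positivity
  set ε : ℝ := μ / ((q₀ :: L).length : ℝ) with hε'
  have hε : 0 < ε := div_pos hminpos hlen
  have e1 : ε * ((q₀ :: L).length : ℝ) = μ := by
    rw [hε']
    field_simp
  have hmem' : ∀ q ∈ q₀ :: L, q.1 ∈ s ∧ q.2 ∈ s := fun q hq => (hmem q hq).2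
  have hq₀s : q₀.1 ∈ s := (hmem q₀ (by simp)).2.1
  set B : V → V → ℝ := fun u v => A u v + ε * pert q₀.1 (q₀ :: L) u v with hB
  have hFCB : FC s m₁ m₂ B := by
    refine ⟨?_, ?_, ?_, ?_⟩
    · intro u v
      have f1 := pert_ge q₀.1 (q₀ :: L) u v
      have g2 : -(ε * cnt u v (q₀ :: L)) ≤ ε * pert q₀.1 (q₀ :: L) u v := by
        have := mul_le_mul_of_nonneg_left f1 hε.le
        linarith [this]
      by_cases hin : (u, v) ∈ q₀ :: L
      · have f2 := cnt_le_length u v (q₀ :: L)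
        have f3 : μ ≤ A u v := hminle (u, v) hin
        have g1 : ε * cnt u v (q₀ :: L) ≤ ε * ((q₀ :: L).length : ℝ) :=
          mul_le_mul_of_nonneg_left f2 hε.le
        show 0 ≤ A u v + ε * pert q₀.1 (q₀ :: L) u v
        linarith
      · have h0 := cnt_eq_zero hin
        have := hA.1 u v
        show 0 ≤ A u v + ε * pert q₀.1 (q₀ :: L) u v
        rw [h0] at g2
        linarith
    · intro u v hne'
      by_cases hz : pert q₀.1 (q₀ :: L) u v = 0
      · apply hA.2.1 u v
        intro h0
        apply hne'
        show A u v + ε * pert q₀.1 (q₀ :: L) u v = 0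
        rw [h0, hz]
        ring
      · exact pert_supp q₀.1 hq₀s (q₀ :: L) hmem' u v hz
    · intro u
      show ∑ v ∈ s, (A u v + ε * pert q₀.1 (q₀ :: L) u v) = m₁ u
      rw [Finset.sum_add_distrib, ← Finset.mul_sum, pert_row L q₀ hmem' u, hA.2.2.1 u]
      ring
    · intro v
      show ∑ u ∈ s, (A u v + ε * pert q₀.1 (q₀ :: L) u v) = m₂ v
      rw [Finset.sum_add_distrib, ← Finset.mul_sum, pert_col hq₀s L q₀ hmem' v, hA.2.2.2 v]
      ring
  have hcost : cost G s B = cost G s A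
      + ε * (connBack G q₀.1 (q₀ :: L) - sumd G (q₀ :: L)) := by
    unfold cost
    have expand : ∀ q ∈ s ×ˢ s, B q.1 q.2 * dd G q.1 q.2
        = A q.1 q.2 * dd G q.1 q.2 + ε * (pert q₀.1 (q₀ :: L) q.1 q.2 * dd G q.1 q.2) := by
      intro q _
      show (A q.1 q.2 + ε * pert q₀.1 (q₀ :: L) q.1 q.2) * dd G q.1 q.2 = _
      ring
    rw [Finset.sum_congr rfl expand, Finset.sum_add_distrib, ← Finset.mul_sum,
      pert_cost G hq₀s L q₀ hmem']
  have hle := hmin B hFCB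
  by_contra hcon
  push_neg at hcon
  have : ε * (connBack G q₀.1 (q₀ :: L) - sumd G (q₀ :: L)) < 0 :=
    mul_neg_of_pos_of_neg hε (by linarith)
  linarith

end MinKey
section Abstract

open IVPAux

lemma abstract_potential (G : SimpleGraph V) (x : V) (s : Finset V)
    (hreach : ∀ u ∈ s, G.Reachable x u) (m₁ m₂ : V → ℝ)
    (h10 : ∀ u, 0 ≤ m₁ u) (h1s : ∀ u, m₁ u ≠ 0 → u ∈ s) (h11 : ∑ u ∈ s, m₁ u = 1)
    (h20 : ∀ u, 0 ≤ m₂ u) (h2s : ∀ u, m₂ u ≠ 0 → u ∈ s) (h21 : ∑ u ∈ s, m₂ u = 1) :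
    ∃ φ : V → ℝ, (∀ w : V, ∃ n : ℤ, φ w = (n : ℝ)) ∧
      (∀ u w : V, G.Reachable u w → |φ u - φ w| ≤ (G.dist u w : ℝ)) ∧
      transportDist G m₁ m₂ = ∑ᶠ w : V, φ w * (m₁ w - m₂ w) := by
  classical
  have hne : ∃ A, FC s m₁ m₂ A := by
    refine ⟨fun u v => m₁ u * m₂ v, fun u v => mul_nonneg (h10 u) (h20 v), ?_, ?_, ?_⟩
    · intro u v hne0
      rcases mul_ne_zero_iff.1 hne0 with ⟨hu, hv⟩
      exact ⟨h1s u hu, h2s v hv⟩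
    · intro u; rw [← Finset.mul_sum, h21, mul_one]
    · intro v; rw [← Finset.sum_mul, h11, one_mul]
  obtain ⟨A, hA, hmin⟩ := exists_min (G := G) h10 h1s h11 hne
  have htd : transportDist G m₁ m₂ = cost G s A := by
    unfold transportDist
    rw [transport_eq (G := G) h10 h1s h11 h2s]
    refine IsLeast.csInf_eq ⟨⟨A, hA, rfl⟩, ?_⟩
    rintro w ⟨B, hB, rfl⟩
    exact hmin B hB
  set R : Finset (V × V) := (s ×ˢ s).filter (fun q => A q.1 q.2 ≠ 0) with hR
  have hRs : ∀ q ∈ R, A q.1 q.2 ≠ 0 ∧ q.1 ∈ s ∧ q.2 ∈ s := by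
    intro q hq
    rw [hR, Finset.mem_filter, Finset.mem_product] at hq
    exact ⟨hq.2, hq.1.1, hq.1.2⟩
  have hCfin : {l : List (V × V) | l.Nodup ∧ ∀ q ∈ l, q ∈ R}.Finite := by
    have hsub : {l : List (V × V) | l.Nodup ∧ ∀ q ∈ l, q ∈ R}
        ⊆ (fun l' : List {q // q ∈ R} => l'.map Subtype.val) ''
          {l' | l'.length ≤ R.card} := by
      intro l hl
      refine ⟨l.pmap (fun q hq => (⟨q, hq⟩ : {q // q ∈ R})) hl.2, ?_, ?_⟩
      · show (l.pmap _ _).length ≤ R.card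
        rw [List.length_pmap]
        have h1 : l.toFinset ⊆ R := fun q hq => hl.2 q (List.mem_toFinset.1 hq)
        calc l.length = l.toFinset.card := (List.toFinset_card_of_nodup hl.1).symm
        _ ≤ R.card := Finset.card_le_card h1
      · show List.map Subtype.val (l.pmap _ _) = l
        rw [List.map_pmap]
        exact List.pmap_eq_map _ ▸ List.map_id l
    exact ((List.finite_length_le _ R.card).image _).subset hsub
  set F : Finset (List (V × V)) := hCfin.toFinset with hF
  have hFmem : ∀ l, l ∈ F ↔ (l.Nodup ∧ ∀ q ∈ l, q ∈ R) := by
    intro l; rw [hF, Set.Finite.mem_toFinset]; rfl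
  have hnilF : [] ∈ F := (hFmem []).2 ⟨List.nodup_nil, by simp⟩
  have hFne : ∀ v : V, (F.image fun l => cval G x l v).Nonempty :=
    fun v => ⟨cval G x [] v, Finset.mem_image_of_mem _ hnilF⟩
  obtain ⟨φ₀, hub, hmax⟩ : ∃ φ₀ : V → ℝ, (∀ v, ∀ l ∈ F, cval G x l v ≤ φ₀ v)
      ∧ (∀ v, ∃ l ∈ F, φ₀ v = cval G x l v) := by
    refine ⟨fun v => (F.image fun l => cval G x l v).max' (hFne v), ?_, ?_⟩
    · intro v l hl
      apply Finset.le_max'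
      exact Finset.mem_image_of_mem _ hl
    · intro v
      obtain ⟨l, hl, he⟩ :=
        Finset.mem_image.1 ((F.image fun l => cval G x l v).max'_mem (hFne v))
      exact ⟨l, hl, he.symm⟩
  have hreach2 : ∀ l ∈ F, ∀ q ∈ l, G.Reachable x q.2 := fun l hl q hq =>
    hreach _ (hRs q (((hFmem l).1 hl).2 q hq)).2.2
  have hlip : ∀ u v : V, G.Reachable x u → G.Reachable x v → φ₀ u - dd G u v ≤ φ₀ v := by
    intro u v hu hv
    obtain ⟨l, hl, he⟩ := hmax u
    rw [he]
    calc cval G x l u - dd G u v ≤ cval G x l v :=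
      cval_lip l (hreach2 l hl) x (SimpleGraph.Reachable.refl x) u v hu hv
    _ ≤ φ₀ v := hub v l hl
  have htight : ∀ a b : V, (a, b) ∈ R → φ₀ b = φ₀ a + dd G a b := by
    intro a b hab
    have has : a ∈ s := (hRs _ hab).2.1
    have hbs : b ∈ s := (hRs _ hab).2.2
    have hxa : G.Reachable x a := hreach a has
    have hxb : G.Reachable x b := hreach b hbs
    have hle : φ₀ b ≤ φ₀ a + dd G a b := by
      have h := hlip b a hxb hxa
      have hc := dd_comm G b a
      linarith
    have hge : φ₀ a + dd G a b ≤ φ₀ b := by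
      obtain ⟨l, hl, he⟩ := hmax a
      obtain ⟨hnd, hmemR⟩ := (hFmem l).1 hl
      by_cases hin : (a, b) ∈ l
      · obtain ⟨P, Q, rfl⟩ := List.append_of_mem hin
        have hsubl : (P ++ [(a, b)]).Sublist (P ++ (a, b) :: Q) :=
          ((List.nil_sublist Q).cons₂ (a, b)).append_left P
        have hP'F : (P ++ [(a, b)]) ∈ F := (hFmem _).2
          ⟨hnd.sublist hsubl, fun q hq => hmemR q (hsubl.subset hq)⟩
        have hmemk : ∀ q ∈ (a, b) :: Q, A q.1 q.2 ≠ 0 ∧ q.1 ∈ s ∧ q.2 ∈ s := by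
          intro q hq
          rcases List.mem_cons.1 hq with h | h
          · subst h; exact hRs _ hab
          · exact hRs q (hmemR q (List.mem_append.2 (Or.inr (List.mem_cons_of_mem _ h))))
        have hkey := key_lemma (G := G) hA hmin Q (a, b) hmemk
        have hconn := connBack_eq G a Q (a, b)
        have hbr := core_bridge G (a, b) Q
        have hsplit := cval_split G a b Q P x
        have hsd : sumd G ((a, b) :: Q) = dd G a b + sumd G Q := rfl
        have hcv : cval G x (P ++ [(a, b)]) b ≤ φ₀ b := hub b _ hP'F
        have hcyc : dd G a b + sumd G Q - entry G b Q - core G Q - dd G (endp b Q) a ≤ 0 := by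
          have h1 : sumd G ((a, b) :: Q) ≤ connBack G a ((a, b) :: Q) := hkey
          rw [hconn, hbr] at h1
          rw [hsd] at h1
          show dd G a b + sumd G Q - entry G b Q - core G Q - dd G (endp (a, b).2 Q) a ≤ 0
          linarith
        linarith [he, hsplit, hcv, hcyc]
      · have hl' : (l ++ [(a, b)]) ∈ F := by
          refine (hFmem _).2 ⟨?_, ?_⟩
          · refine hnd.append (List.nodup_singleton _) ?_
            intro q hq hq'
            rw [List.mem_singleton] at hq'
            subst hq'
            exact hin hq
          · intro q hq
            rcases List.mem_append.1 hq with h | h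
            · exact hmemR q h
            · rw [List.mem_singleton] at h
              subst h
              exact hab
        have hcv := hub b _ hl'
        rw [cval_ext G (a, b) l x] at hcv
        linarith [he, hcv]
    linarith
  set φ : V → ℝ := fun v => if G.Reachable x v then -φ₀ v else 0 with hφ
  refine ⟨φ, ?_, ?_, ?_⟩
  · intro w
    rw [hφ]
    dsimp only
    split_ifs
    · obtain ⟨l, hl, he⟩ := hmax w
      obtain ⟨n, hn⟩ := cval_int G l x w
      exact ⟨-n, by rw [he, hn]; push_cast; ring⟩
    · exact ⟨0, by norm_num⟩
  · intro u w hr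
    rw [hφ]
    dsimp only
    by_cases hu : G.Reachable x u
    · have hw : G.Reachable x w := hu.trans hr
      rw [if_pos hu, if_pos hw]
      have h1 := hlip u w hu hw
      have h2 := hlip w u hw hu
      have hc := dd_comm G u w
      rw [abs_le]
      constructor
      · show -(G.dist u w : ℝ) ≤ -φ₀ u - -φ₀ w
        have : dd G u w = (G.dist u w : ℝ) := rfl
        linarith
      · show -φ₀ u - -φ₀ w ≤ (G.dist u w : ℝ)
        have : dd G w u = (G.dist w u : ℝ) := rfl
        have hc2 : (G.dist w u : ℝ) = (G.dist u w : ℝ) := by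
          rw [SimpleGraph.dist_comm]
        linarith
    · have hw : ¬G.Reachable x w := fun hw => hu (hw.trans hr.symm)
      rw [if_neg hu, if_neg hw]
      simp
  · rw [htd]
    have e1 : ∀ q ∈ s ×ˢ s, A q.1 q.2 * dd G q.1 q.2 = A q.1 q.2 * (φ₀ q.2 - φ₀ q.1) := by
      intro q hq
      by_cases hz : A q.1 q.2 = 0
      · rw [hz]; ring
      · have hqR : (q.1, q.2) ∈ R := by
          rw [hR, Finset.mem_filter]
          exact ⟨by rwa [Prod.mk.eta], by rwa [Prod.mk.eta]⟩
        have ht := htight q.1 q.2 hqR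
        rw [show dd G q.1 q.2 = φ₀ q.2 - φ₀ q.1 from by linarith]
    calc cost G s A = ∑ q ∈ s ×ˢ s, A q.1 q.2 * (φ₀ q.2 - φ₀ q.1) :=
      Finset.sum_congr rfl e1
    _ = (∑ q ∈ s ×ˢ s, A q.1 q.2 * φ₀ q.2) - ∑ q ∈ s ×ˢ s, A q.1 q.2 * φ₀ q.1 := by
      rw [← Finset.sum_sub_distrib]
      exact Finset.sum_congr rfl fun q _ => by ring
    _ = (∑ v ∈ s, φ₀ v * m₂ v) - ∑ u ∈ s, φ₀ u * m₁ u := by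
      congr 1
      · rw [Finset.sum_product]
        rw [Finset.sum_comm]
        refine Finset.sum_congr rfl fun v _ => ?_
        show ∑ u ∈ s, A u v * φ₀ v = φ₀ v * m₂ v
        rw [← Finset.sum_mul, hA.2.2.2 v]; ring
      · rw [Finset.sum_product]
        refine Finset.sum_congr rfl fun u _ => ?_
        show ∑ v ∈ s, A u v * φ₀ u = φ₀ u * m₁ u
        rw [← Finset.sum_mul, hA.2.2.1 u]; ring
    _ = ∑ w ∈ s, φ w * (m₁ w - m₂ w) := by
      rw [← Finset.sum_sub_distrib]
      refine Finset.sum_congr rfl fun w hws => ?_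
      rw [hφ]
      dsimp only
      rw [if_pos (hreach w hws)]
      ring
    _ = ∑ᶠ w : V, φ w * (m₁ w - m₂ w) := by
      symm
      apply finsum_eq_sum_of_support_subset
      intro w hw
      by_contra hws
      have hm1 : m₁ w = 0 := by
        by_contra h
        exact hws (h1s w h)
      have hm2 : m₂ w = 0 := by
        by_contra h
        exact hws (h2s w h)
      apply hw
      show φ w * (m₁ w - m₂ w) = 0
      rw [hm1, hm2]
      ring

end Abstract
section Final

open IVPAux

lemma lazyWalk_nonneg_s11 (G : SimpleGraph V) [G.LocallyFinite] {p : ℝ}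
    (hp : p ∈ Set.Icc (0:ℝ) 1) (z u : V) : 0 ≤ lazyWalk G p z u := by
  unfold lazyWalk
  split_ifs
  · exact hp.1
  · exact div_nonneg (by linarith [hp.2]) (Nat.cast_nonneg _)
  · exact le_refl 0

lemma lazyWalk_supp (G : SimpleGraph V) [G.LocallyFinite] (p : ℝ) (z u : V)
    (h : lazyWalk G p z u ≠ 0) : u = z ∨ G.Adj z u := by
  unfold lazyWalk at h
  split_ifs at h with h1 h2
  · exact Or.inl h1
  · exact Or.inr h2
  · exact absurd rfl h

lemma lazyWalk_sum [DecidableEq V] (G : SimpleGraph V) [G.LocallyFinite] (p : ℝ) {z : V}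
    (hz : 0 < G.degree z) {s : Finset V} (hsub : insert z (G.neighborFinset z) ⊆ s) :
    ∑ u ∈ s, lazyWalk G p z u = 1 := by
  have hzeros : ∀ u ∈ s, u ∉ insert z (G.neighborFinset z) → lazyWalk G p z u = 0 := by
    intro u _ hu
    unfold lazyWalk
    split_ifs with h1 h2
    · exact absurd (Finset.mem_insert.2 (Or.inl h1)) hu
    · exact absurd (Finset.mem_insert.2 (Or.inr ((SimpleGraph.mem_neighborFinset G z u).2 h2))) hu
    · rfl
  rw [← Finset.sum_subset hsub hzeros]
  have hznmem : z ∉ G.neighborFinset z := by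
    simp [SimpleGraph.mem_neighborFinset]
  rw [Finset.sum_insert hznmem]
  have hzz : lazyWalk G p z z = p := by
    unfold lazyWalk
    rw [if_pos rfl]
  have hval : ∀ u ∈ G.neighborFinset z, lazyWalk G p z u = (1 - p) / (G.degree z : ℝ) := by
    intro u hu
    rw [SimpleGraph.mem_neighborFinset] at hu
    unfold lazyWalk
    rw [if_neg (fun h => G.irrefl (h ▸ hu)), if_pos hu]
  rw [hzz, Finset.sum_congr rfl hval, Finset.sum_const,
    SimpleGraph.card_neighborFinset_eq_degree, nsmul_eq_mul]
  have hdeg : (G.degree z : ℝ) ≠ 0 := Nat.cast_ne_zero.2 hz.ne'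
  field_simp
  ring

end Final
theorem integer_valued_potential' (G : SimpleGraph V) [G.LocallyFinite]
    (x y : V) (hxy : G.Adj x y) (p : ℝ) (hp : p ∈ Set.Icc (0:ℝ) 1) :
    ∃ φ : V → ℝ, (∀ w : V, ∃ n : ℤ, φ w = (n : ℝ)) ∧
      (∀ u w : V, G.Reachable u w → |φ u - φ w| ≤ (G.dist u w : ℝ)) ∧
      transportDist G (lazyWalk G p x) (lazyWalk G p y)
        = ∑ᶠ w : V, φ w * (lazyWalk G p x w - lazyWalk G p y w) := by
  classical
  set s : Finset V := insert x (insert y (G.neighborFinset x ∪ G.neighborFinset y)) with hs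
  have hmemiff : ∀ u, u ∈ s ↔ (u = x ∨ u = y ∨ G.Adj x u ∨ G.Adj y u) := by
    intro u
    rw [hs]
    simp [SimpleGraph.mem_neighborFinset]
  have hreach : ∀ u ∈ s, G.Reachable x u := by
    intro u hu
    rcases (hmemiff u).1 hu with h | h | h | h
    · subst h; exact SimpleGraph.Reachable.refl _
    · subst h; exact hxy.reachable
    · exact h.reachable
    · exact hxy.reachable.trans h.reachable
  have hdx : 0 < G.degree x := by
    rw [SimpleGraph.degree_pos_iff_exists_adj]
    exact ⟨y, hxy⟩
  have hdy : 0 < G.degree y := by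
    rw [SimpleGraph.degree_pos_iff_exists_adj]
    exact ⟨x, hxy.symm⟩
  have hsubx : insert x (G.neighborFinset x) ⊆ s := by
    intro u hu
    rcases Finset.mem_insert.1 hu with h | h
    · exact (hmemiff u).2 (Or.inl h)
    · exact (hmemiff u).2 (Or.inr (Or.inr (Or.inl ((SimpleGraph.mem_neighborFinset G x u).1 h))))
  have hsuby : insert y (G.neighborFinset y) ⊆ s := by
    intro u hu
    rcases Finset.mem_insert.1 hu with h | h
    · exact (hmemiff u).2 (Or.inr (Or.inl h))
    · exact (hmemiff u).2
        (Or.inr (Or.inr (Or.inr ((SimpleGraph.mem_neighborFinset G y u).1 h))))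
  have h1s : ∀ u, lazyWalk G p x u ≠ 0 → u ∈ s := by
    intro u h
    rcases lazyWalk_supp G p x u h with h' | h'
    · exact (hmemiff u).2 (Or.inl h')
    · exact (hmemiff u).2 (Or.inr (Or.inr (Or.inl h')))
  have h2s : ∀ u, lazyWalk G p y u ≠ 0 → u ∈ s := by
    intro u h
    rcases lazyWalk_supp G p y u h with h' | h'
    · exact (hmemiff u).2 (Or.inr (Or.inl h'))
    · exact (hmemiff u).2 (Or.inr (Or.inr (Or.inr h')))
  exact abstract_potential G x s hreach (lazyWalk G p x) (lazyWalk G p y)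
    (fun u => lazyWalk_nonneg_s11 G hp x u) h1s (lazyWalk_sum G p hdx hsubx)
    (fun u => lazyWalk_nonneg_s11 G hp y u) h2s (lazyWalk_sum G p hdy hsuby)


/-- Lemma 9 (integer-valued Kantorovich potential): for a locally finite graph `G`,
adjacent vertices `x ~ y` and `p ∈ [0,1]`, there is an integer-valued `1`-Lipschitz
function `φ` with `W(m_x^p, m_y^p) = Σ_w φ(w) (m_x^p(w) - m_y^p(w))`. -/
theorem integer_valued_potential (G : SimpleGraph V) [G.LocallyFinite]
    (x y : V) (hxy : G.Adj x y) (p : ℝ) (hp : p ∈ Set.Icc (0:ℝ) 1) :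
    ∃ φ : V → ℝ, (∀ w : V, ∃ n : ℤ, φ w = (n : ℝ)) ∧
      (∀ u w : V, G.Reachable u w → |φ u - φ w| ≤ (G.dist u w : ℝ)) ∧
      transportDist G (lazyWalk G p x) (lazyWalk G p y)
        = ∑ᶠ w : V, φ w * (lazyWalk G p x w - lazyWalk G p y w) := by
  exact integer_valued_potential' G x y hxy p hp
end

section
/- Let G be a simple connected graph. For every pair of distinct vertices x, y, the function α ↦ κ_α(x,y) is concave on [0,1]. -/
open Filter Set

variable {V : Type*}

section Aux

variable (G : SimpleGraph V) [G.LocallyFinite]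

private lemma slice_left_finite {A : V → V → ℝ}
    (h : (Function.support fun p : V × V => A p.1 p.2).Finite) (x : V) :
    (Function.support (A x)).Finite := by
  have hsub : Function.support (A x) ⊆
      Prod.mk x ⁻¹' (Function.support fun p : V × V => A p.1 p.2) := fun y hy => hy
  exact (h.preimage ((Prod.mk_right_injective x).injOn)).subset hsub

private lemma slice_right_finite {A : V → V → ℝ}
    (h : (Function.support fun p : V × V => A p.1 p.2).Finite) (y : V) :
    (Function.support (fun x => A x y)).Finite := by
  have hsub : Function.support (fun x => A x y) ⊆
      (fun x => (x, y)) ⁻¹' (Function.support fun p : V × V => A p.1 p.2) := fun u hu => hu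
  exact (h.preimage ((Prod.mk_left_injective y).injOn)).subset hsub

private lemma lazy_support_subset (α : ℝ) (x : V) :
    Function.support (lazyWalk G α x) ⊆ insert x (G.neighborFinset x : Set V) := by
  intro v hv
  simp only [Function.mem_support, lazyWalk] at hv
  by_cases h1 : v = x
  · exact Or.inl h1
  · rw [if_neg h1] at hv
    by_cases h2 : G.Adj x v
    · exact Or.inr (by simpa using h2)
    · simp [h2] at hv

private lemma lazy_support_finite (α : ℝ) (x : V) :
    (Function.support (lazyWalk G α x)).Finite :=
  (Set.Finite.insert x (G.neighborFinset x : Set V).toFinite).subset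
    (lazy_support_subset G α x)

private lemma lazy_nonneg {α : ℝ} (hα : α ∈ Set.Icc (0:ℝ) 1) (x v : V) :
    0 ≤ lazyWalk G α x v := by
  unfold lazyWalk
  split_ifs with h1 h2
  · exact hα.1
  · apply div_nonneg (by linarith [hα.2]) (Nat.cast_nonneg _)
  · exact le_refl 0

private lemma lazy_le_one {α : ℝ} (hα : α ∈ Set.Icc (0:ℝ) 1) {x : V}
    (hd : 0 < G.degree x) (v : V) : lazyWalk G α x v ≤ 1 := by
  unfold lazyWalk
  have h1 : (1:ℝ) ≤ (G.degree x : ℝ) := by exact_mod_cast hd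
  split_ifs with hh1 hh2
  · exact hα.2
  · rw [div_le_one (by linarith)]
    linarith [hα.1]
  · norm_num

private lemma lazy_sum {α : ℝ} {x : V} (hd : 0 < G.degree x) :
    ∑ᶠ v, lazyWalk G α x v = 1 := by
  classical
  rw [finsum_eq_finset_sum_of_support_subset _
    (by simpa using lazy_support_subset G α x : Function.support (lazyWalk G α x)
      ⊆ (insert x (G.neighborFinset x) : Finset V))]
  rw [Finset.sum_insert (G.notMem_neighborFinset_self x)]
  have hx : lazyWalk G α x x = α := by simp [lazyWalk]
  have hsum : ∑ v ∈ G.neighborFinset x, lazyWalk G α x v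
      = (G.degree x : ℝ) * ((1 - α) / (G.degree x : ℝ)) := by
    rw [Finset.sum_congr rfl (fun v hv => ?_), Finset.sum_const, nsmul_eq_mul,
      SimpleGraph.card_neighborFinset_eq_degree]
    have hadj : G.Adj x v := by simpa using hv
    have hne : v ≠ x := fun h => (h ▸ hadj).ne rfl
    simp [lazyWalk, hne, hadj]
  have hd0 : (G.degree x : ℝ) ≠ 0 := by positivity
  rw [hx, hsum, mul_div_cancel₀ _ hd0]
  ring

private lemma exists_adj (hconn : G.Connected) {x y : V} (hxy : x ≠ y) :
    0 < G.degree x := by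
  rw [G.degree_pos_iff_exists_adj]
  obtain ⟨w⟩ := hconn.preconnected x y
  cases w with
  | nil => exact absurd rfl hxy
  | cons h p => exact ⟨_, h⟩

private lemma transport_lower (m₁ m₂ : V → ℝ) :
    ∀ w ∈ {w : ℝ | ∃ A : V → V → ℝ, IsCoupling m₁ m₂ A ∧
      w = ∑ᶠ p : V × V, A p.1 p.2 * (G.dist p.1 p.2 : ℝ)}, 0 ≤ w := by
  rintro w ⟨A, hA, rfl⟩
  exact finsum_nonneg fun p => mul_nonneg (hA.2.1 _ _).1 (Nat.cast_nonneg _)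

private lemma isCoupling_prod {m₁ m₂ : V → ℝ}
    (h₁ : (Function.support m₁).Finite) (h₂ : (Function.support m₂).Finite)
    (hn₁ : ∀ v, 0 ≤ m₁ v) (hb₁ : ∀ v, m₁ v ≤ 1)
    (hn₂ : ∀ v, 0 ≤ m₂ v) (hb₂ : ∀ v, m₂ v ≤ 1)
    (hs₁ : ∑ᶠ v, m₁ v = 1) (hs₂ : ∑ᶠ v, m₂ v = 1) :
    IsCoupling m₁ m₂ (fun u v => m₁ u * m₂ v) := by
  refine ⟨?_, ?_, ?_, ?_⟩
  · refine (h₁.prod h₂).subset ?_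
    rintro ⟨u, v⟩ h
    simp only [Function.mem_support] at h
    exact ⟨fun h0 => h (by simp [h0]), fun h0 => h (by simp [h0])⟩
  · exact fun u v => ⟨mul_nonneg (hn₁ u) (hn₂ v),
      mul_le_one₀ (hb₁ u) (hn₂ v) (hb₂ v)⟩
  · intro u
    rw [← mul_finsum _ _, hs₂, mul_one]
  · intro v
    rw [← finsum_mul _ _, hs₁, one_mul]

private lemma transport_nonempty {m₁ m₂ : V → ℝ}
    (h₁ : (Function.support m₁).Finite) (h₂ : (Function.support m₂).Finite)
    (hn₁ : ∀ v, 0 ≤ m₁ v) (hb₁ : ∀ v, m₁ v ≤ 1)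
    (hn₂ : ∀ v, 0 ≤ m₂ v) (hb₂ : ∀ v, m₂ v ≤ 1)
    (hs₁ : ∑ᶠ v, m₁ v = 1) (hs₂ : ∑ᶠ v, m₂ v = 1) :
    {w : ℝ | ∃ A : V → V → ℝ, IsCoupling m₁ m₂ A ∧
      w = ∑ᶠ p : V × V, A p.1 p.2 * (G.dist p.1 p.2 : ℝ)}.Nonempty :=
  ⟨_, _, isCoupling_prod h₁ h₂ hn₁ hb₁ hn₂ hb₂ hs₁ hs₂, rfl⟩

private lemma lazy_affine {a b α₁ α₂ : ℝ} (hab : a + b = 1) (x : V) :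
    lazyWalk G (a * α₁ + b * α₂) x
      = fun v => a * lazyWalk G α₁ x v + b * lazyWalk G α₂ x v := by
  have hb : b = 1 - a := by linarith
  subst hb
  funext v
  unfold lazyWalk
  split_ifs with h1 h2
  · ring
  · ring
  · ring

private lemma coupling_combo {m₁ m₂ n₁ n₂ : V → ℝ} {A B : V → V → ℝ} {a b : ℝ}
    (hA : IsCoupling m₁ m₂ A) (hB : IsCoupling n₁ n₂ B)
    (ha : 0 ≤ a) (hb : 0 ≤ b) (hab : a + b = 1) :
    IsCoupling (fun v => a * m₁ v + b * n₁ v) (fun v => a * m₂ v + b * n₂ v)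
      (fun u v => a * A u v + b * B u v) ∧
    (∑ᶠ p : V × V, (a * A p.1 p.2 + b * B p.1 p.2) * (G.dist p.1 p.2 : ℝ))
      = a * (∑ᶠ p : V × V, A p.1 p.2 * (G.dist p.1 p.2 : ℝ))
        + b * (∑ᶠ p : V × V, B p.1 p.2 * (G.dist p.1 p.2 : ℝ)) := by
  obtain ⟨hAfin, hAb, hA1, hA2⟩ := hA
  obtain ⟨hBfin, hBb, hB1, hB2⟩ := hB
  constructor
  · refine ⟨?_, ?_, ?_, ?_⟩
    · refine (hAfin.union hBfin).subset ?_
      rintro ⟨u, v⟩ h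
      simp only [Function.mem_support] at h
      by_contra hc
      simp only [Set.mem_union, Function.mem_support, not_or, not_not] at hc
      exact h (by rw [hc.1, hc.2]; ring)
    · intro u v
      refine ⟨add_nonneg (mul_nonneg ha (hAb u v).1) (mul_nonneg hb (hBb u v).1), ?_⟩
      calc a * A u v + b * B u v ≤ a * 1 + b * 1 := by
            gcongr
            exacts [(hAb u v).2, (hBb u v).2]
        _ = 1 := by linarith
    · intro u
      rw [finsum_add_distrib
        (((slice_left_finite hAfin u)).subset (Function.support_mul_subset_right _ _))
        (((slice_left_finite hBfin u)).subset (Function.support_mul_subset_right _ _)),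
        ← mul_finsum _ _,
        ← mul_finsum _ _, hA1, hB1]
    · intro v
      rw [finsum_add_distrib
        (((slice_right_finite hAfin v)).subset (Function.support_mul_subset_right _ _))
        (((slice_right_finite hBfin v)).subset (Function.support_mul_subset_right _ _)),
        ← mul_finsum _ _,
        ← mul_finsum _ _, hA2, hB2]
  · have hAfin' : (Function.support fun p : V × V =>
        A p.1 p.2 * (G.dist p.1 p.2 : ℝ)).Finite :=
      hAfin.subset (Function.support_mul_subset_left _ _)
    have hBfin' : (Function.support fun p : V × V =>
        B p.1 p.2 * (G.dist p.1 p.2 : ℝ)).Finite :=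
      hBfin.subset (Function.support_mul_subset_left _ _)
    calc (∑ᶠ p : V × V, (a * A p.1 p.2 + b * B p.1 p.2) * (G.dist p.1 p.2 : ℝ))
        = ∑ᶠ p : V × V, (a * (A p.1 p.2 * (G.dist p.1 p.2 : ℝ))
            + b * (B p.1 p.2 * (G.dist p.1 p.2 : ℝ))) := by
          exact finsum_congr fun p => by ring
      _ = a * (∑ᶠ p : V × V, A p.1 p.2 * (G.dist p.1 p.2 : ℝ))
            + b * (∑ᶠ p : V × V, B p.1 p.2 * (G.dist p.1 p.2 : ℝ)) := by
          rw [finsum_add_distrib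
            (hAfin'.subset (Function.support_mul_subset_right _ _))
            (hBfin'.subset (Function.support_mul_subset_right _ _)),
            ← mul_finsum _ _, ← mul_finsum _ _]

end Aux

/-- For distinct vertices `x, y` of a simple connected graph, the map
`α ↦ κ_α(x,y)` is concave on `[0,1]`. -/
theorem alphaRicci_concave (G : SimpleGraph V) [G.LocallyFinite]
    (hconn : G.Connected) (x y : V) (hxy : x ≠ y) :
    ConcaveOn ℝ (Set.Icc (0:ℝ) 1) (fun α : ℝ => alphaRicci G α x y) := by
  classical
  have hdx : 0 < G.degree x := exists_adj G hconn hxy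
  have hdy : 0 < G.degree y := exists_adj G hconn hxy.symm
  have hdpos : 0 < (G.dist x y : ℝ) := by exact_mod_cast hconn.pos_dist_of_ne hxy
  have hbdd : ∀ m₁ m₂ : V → ℝ, BddBelow {w : ℝ | ∃ A : V → V → ℝ, IsCoupling m₁ m₂ A ∧
      w = ∑ᶠ p : V × V, A p.1 p.2 * (G.dist p.1 p.2 : ℝ)} :=
    fun m₁ m₂ => ⟨0, fun w hw => transport_lower G m₁ m₂ w hw⟩
  have hne : ∀ α ∈ Set.Icc (0:ℝ) 1,
      {w : ℝ | ∃ A : V → V → ℝ, IsCoupling (lazyWalk G α x) (lazyWalk G α y) A ∧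
        w = ∑ᶠ p : V × V, A p.1 p.2 * (G.dist p.1 p.2 : ℝ)}.Nonempty := fun α hα =>
    transport_nonempty G (lazy_support_finite G α x) (lazy_support_finite G α y)
      (lazy_nonneg G hα x) (lazy_le_one G hα hdx) (lazy_nonneg G hα y)
      (lazy_le_one G hα hdy) (lazy_sum G hdx) (lazy_sum G hdy)
  refine ⟨convex_Icc 0 1, ?_⟩
  intro α₁ hα₁ α₂ hα₂ a b ha hb hab
  simp only [smul_eq_mul, alphaRicci]
  have key : transportDist G (lazyWalk G (a*α₁+b*α₂) x) (lazyWalk G (a*α₁+b*α₂) y)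
      ≤ a * transportDist G (lazyWalk G α₁ x) (lazyWalk G α₁ y)
        + b * transportDist G (lazyWalk G α₂ x) (lazyWalk G α₂ y) := by
    unfold transportDist
    apply le_of_forall_pos_le_add
    intro ε hε
    obtain ⟨w₁, hw₁mem, hw₁⟩ := exists_lt_of_csInf_lt (hne α₁ hα₁)
      (lt_add_of_pos_right _ hε)
    obtain ⟨w₂, hw₂mem, hw₂⟩ := exists_lt_of_csInf_lt (hne α₂ hα₂)
      (lt_add_of_pos_right _ hε)
    obtain ⟨A, hA, hwA⟩ := hw₁mem
    obtain ⟨B, hB, hwB⟩ := hw₂mem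
    obtain ⟨hC, hcost⟩ := coupling_combo G hA hB ha hb hab
    have hmem : a * w₁ + b * w₂ ∈ {w : ℝ | ∃ C : V → V → ℝ,
        IsCoupling (lazyWalk G (a*α₁+b*α₂) x) (lazyWalk G (a*α₁+b*α₂) y) C ∧
        w = ∑ᶠ p : V × V, C p.1 p.2 * (G.dist p.1 p.2 : ℝ)} := by
      refine ⟨fun u v => a * A u v + b * B u v, ?_, ?_⟩
      · rw [lazy_affine G hab x, lazy_affine G hab y]; exact hC
      · rw [hcost, hwA, hwB]
    calc sInf _ ≤ a * w₁ + b * w₂ := csInf_le (hbdd _ _) hmem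
      _ ≤ a * (sInf {w : ℝ | ∃ A : V → V → ℝ,
            IsCoupling (lazyWalk G α₁ x) (lazyWalk G α₁ y) A ∧
            w = ∑ᶠ p : V × V, A p.1 p.2 * (G.dist p.1 p.2 : ℝ)} + ε)
          + b * (sInf {w : ℝ | ∃ A : V → V → ℝ,
            IsCoupling (lazyWalk G α₂ x) (lazyWalk G α₂ y) A ∧
            w = ∑ᶠ p : V × V, A p.1 p.2 * (G.dist p.1 p.2 : ℝ)} + ε) := by
          exact add_le_add (mul_le_mul_of_nonneg_left hw₁.le ha)
            (mul_le_mul_of_nonneg_left hw₂.le hb)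
      _ = _ := by
          have hb' : b = 1 - a := by linarith
          subst hb'
          ring
  set W₁ := transportDist G (lazyWalk G α₁ x) (lazyWalk G α₁ y) with hW₁
  set W₂ := transportDist G (lazyWalk G α₂ x) (lazyWalk G α₂ y) with hW₂
  set Wt := transportDist G (lazyWalk G (a*α₁+b*α₂) x) (lazyWalk G (a*α₁+b*α₂) y) with hWt
  have hdiv : Wt / (G.dist x y : ℝ) ≤ (a * W₁ + b * W₂) / (G.dist x y : ℝ) := by
    gcongr
  have hre : (a * W₁ + b * W₂) / (G.dist x y : ℝ)
      = a * (W₁ / (G.dist x y : ℝ)) + b * (W₂ / (G.dist x y : ℝ)) := by ring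
  linarith
end

section
/- Let G be a simple connected graph. For every edge xy of G, κ_LLY(x,y) ≥ κ_0(x,y) = 1 − W(m_x^0, m_y^0), where m_x^0 and m_y^0 are the (non-lazy) uniform random walk distributions at x and y. -/
open Filter Set

variable {V : Type*}

section Helpers
open Function

lemma lazyWalk_support_finite (G : SimpleGraph V) [G.LocallyFinite] (α : ℝ) (x : V) :
    (support (lazyWalk G α x)).Finite := by
  apply Set.Finite.subset (Set.Finite.insert x (G.neighborSet x).toFinite)
  intro v hv
  by_cases h : v = x
  · exact Or.inl h
  · right
    by_contra hadj
    apply hv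
    have : ¬ G.Adj x v := fun ha => hadj (by simpa [SimpleGraph.mem_neighborSet] using ha)
    simp [lazyWalk, h, this]

lemma lazyWalk_zero_sum (G : SimpleGraph V) [G.LocallyFinite] (x : V) (hx : 0 < G.degree x) :
    ∑ᶠ v, lazyWalk G 0 x v = 1 := by
  have h : lazyWalk G 0 x = Set.indicator (G.neighborFinset x : Set V)
      (fun _ => 1 / (G.degree x : ℝ)) := by
    funext v
    simp only [lazyWalk]
    by_cases hv : v = x
    · subst hv; simp [Set.indicator, SimpleGraph.irrefl]
    · by_cases ha : G.Adj x v
      · simp [hv, ha, Set.indicator]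
      · simp [hv, ha, Set.indicator]
  rw [h, ← finsum_mem_def, finsum_mem_coe_finset]
  rw [Finset.sum_const, SimpleGraph.card_neighborFinset_eq_degree, nsmul_eq_mul]
  have : (G.degree x : ℝ) ≠ 0 := by positivity
  field_simp

lemma lazyWalk_zero_nonneg (G : SimpleGraph V) [G.LocallyFinite] (x v : V) :
    0 ≤ lazyWalk G 0 x v := by
  simp only [lazyWalk]
  split_ifs <;> positivity

lemma lazyWalk_zero_le_one (G : SimpleGraph V) [G.LocallyFinite] (x v : V) :
    lazyWalk G 0 x v ≤ 1 := by
  simp only [lazyWalk]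
  split_ifs with h1 h2
  · norm_num
  · have hd : 0 < G.degree x := (G.degree_pos_iff_exists_adj _).mpr ⟨v, h2⟩
    rw [div_le_one (by exact_mod_cast hd)]
    norm_num
    exact_mod_cast hd
  · norm_num

lemma exists_coupling (G : SimpleGraph V) [G.LocallyFinite] {x y : V} (hxy : G.Adj x y) :
    ∃ A, IsCoupling (lazyWalk G 0 x) (lazyWalk G 0 y) A := by
  have hdx : 0 < G.degree x := (G.degree_pos_iff_exists_adj _).mpr ⟨y, hxy⟩
  have hdy : 0 < G.degree y := (G.degree_pos_iff_exists_adj _).mpr ⟨x, hxy.symm⟩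
  refine ⟨fun u v => lazyWalk G 0 x u * lazyWalk G 0 y v, ?_, ?_, ?_, ?_⟩
  · apply Set.Finite.subset ((lazyWalk_support_finite G 0 x).prod (lazyWalk_support_finite G 0 y))
    intro p hp
    constructor
    · intro h; apply hp; simp [h]
    · intro h; apply hp; simp [h]
  · intro u v
    exact ⟨mul_nonneg (lazyWalk_zero_nonneg G x u) (lazyWalk_zero_nonneg G y v),
      mul_le_one₀ (lazyWalk_zero_le_one G x u) (lazyWalk_zero_nonneg G y v)
        (lazyWalk_zero_le_one G y v)⟩
  · intro u
    rw [← mul_finsum' _ _ (lazyWalk_support_finite G 0 y), lazyWalk_zero_sum G y hdy, mul_one]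
  · intro v
    have : (fun u => lazyWalk G 0 x u * lazyWalk G 0 y v)
        = fun u => lazyWalk G 0 y v * lazyWalk G 0 x u := by funext u; ring
    rw [this, ← mul_finsum' _ _ (lazyWalk_support_finite G 0 x), lazyWalk_zero_sum G x hdx, mul_one]

lemma slice_fst_finite {A : V → V → ℝ} (h : (support fun p : V × V => A p.1 p.2).Finite)
    (u : V) : (support fun v => A u v).Finite := by
  apply Set.Finite.subset (h.image Prod.snd)
  intro v hv
  exact ⟨(u, v), hv, rfl⟩

lemma slice_snd_finite {A : V → V → ℝ} (h : (support fun p : V × V => A p.1 p.2).Finite)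
    (v : V) : (support fun u => A u v).Finite := by
  apply Set.Finite.subset (h.image Prod.fst)
  intro u hu
  exact ⟨(u, v), hu, rfl⟩

lemma transport_mix (G : SimpleGraph V) [G.LocallyFinite] {x y : V} (hxy : G.Adj x y)
    {α : ℝ} (h0 : 0 ≤ α) (h1 : α < 1) :
    transportDist G (lazyWalk G α x) (lazyWalk G α y)
      ≤ α + (1 - α) * transportDist G (lazyWalk G 0 x) (lazyWalk G 0 y) := by
  classical
  set S0 := {w : ℝ | ∃ A : V → V → ℝ, IsCoupling (lazyWalk G 0 x) (lazyWalk G 0 y) A ∧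
    w = ∑ᶠ p : V × V, A p.1 p.2 * (G.dist p.1 p.2 : ℝ)} with hS0
  set Sα := {w : ℝ | ∃ A : V → V → ℝ, IsCoupling (lazyWalk G α x) (lazyWalk G α y) A ∧
    w = ∑ᶠ p : V × V, A p.1 p.2 * (G.dist p.1 p.2 : ℝ)} with hSα
  have hd : (G.dist x y : ℝ) = 1 := by
    exact_mod_cast congrArg Nat.cast (SimpleGraph.dist_eq_one_iff_adj.mpr hxy)
  have hαpos : (0:ℝ) < 1 - α := by linarith
  -- membership claim
  have key : ∀ w0 ∈ S0, α + (1 - α) * w0 ∈ Sα := by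
    rintro w0 ⟨A0, hA0, hw0⟩
    refine ⟨fun u v => (if u = x ∧ v = y then α else 0) + (1 - α) * A0 u v, ⟨?_, ?_, ?_, ?_⟩, ?_⟩
    · apply Set.Finite.subset (hA0.1.insert (x, y))
      intro p hp
      by_cases hA : A0 p.1 p.2 = 0
      · left
        by_contra hne
        apply hp
        have : ¬ (p.1 = x ∧ p.2 = y) := fun ⟨ha, hb⟩ => hne (Prod.ext ha hb)
        simp [this, hA]
      · exact Or.inr hA
    · intro u v
      obtain ⟨ha, hb⟩ := hA0.2.1 u v
      dsimp only
      constructor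
      · split_ifs <;> nlinarith
      · split_ifs <;> nlinarith
    · intro u
      have hfin1 : (support fun v => if u = x ∧ v = y then α else 0).Finite := by
        apply Set.Finite.subset (Set.finite_singleton y)
        intro v hv
        by_contra hne
        exact hv (if_neg fun h => hne h.2)
      have hfin2 : (support fun v => (1 - α) * A0 u v).Finite := by
        apply Set.Finite.subset (slice_fst_finite hA0.1 u)
        intro v hv hz
        exact hv (by simp [hz])
      rw [finsum_add_distrib hfin1 hfin2, ← mul_finsum' _ _ (slice_fst_finite hA0.1 u),
        hA0.2.2.1 u, finsum_eq_single _ y (fun v hv => if_neg fun h => hv h.2)]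
      by_cases hu : u = x
      · subst hu
        simp [lazyWalk, SimpleGraph.irrefl]
      · by_cases ha : G.Adj x u
        · rw [if_neg (show ¬ (u = x ∧ y = y) from fun h => hu h.1)]
          simp only [lazyWalk, if_neg hu, if_pos ha]
          ring
        · simp [lazyWalk, hu, ha]
    · intro v
      have hfin1 : (support fun u => if u = x ∧ v = y then α else 0).Finite := by
        apply Set.Finite.subset (Set.finite_singleton x)
        intro u hu
        by_contra hne
        exact hu (if_neg fun h => hne h.1)
      have hfin2 : (support fun u => (1 - α) * A0 u v).Finite := by
        apply Set.Finite.subset (slice_snd_finite hA0.1 v)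
        intro u hu hz
        exact hu (by simp [hz])
      rw [finsum_add_distrib hfin1 hfin2, ← mul_finsum' _ _ (slice_snd_finite hA0.1 v),
        hA0.2.2.2 v, finsum_eq_single _ x (fun u hu => if_neg fun h => hu h.1)]
      by_cases hv : v = y
      · subst hv
        simp [lazyWalk, SimpleGraph.irrefl]
      · by_cases ha : G.Adj y v
        · rw [if_neg (show ¬ (x = x ∧ v = y) from fun h => hv h.2)]
          simp only [lazyWalk, if_neg hv, if_pos ha]
          ring
        · simp [lazyWalk, hv, ha]
    · -- cost computation
      have hsplit : (fun p : V × V =>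
          ((if p.1 = x ∧ p.2 = y then α else 0) + (1 - α) * A0 p.1 p.2) * (G.dist p.1 p.2 : ℝ))
          = fun p : V × V => (if p.1 = x ∧ p.2 = y then α else 0) * (G.dist p.1 p.2 : ℝ)
            + (1 - α) * (A0 p.1 p.2 * (G.dist p.1 p.2 : ℝ)) := by
        funext p; ring
      have hfin1 : (support fun p : V × V =>
          (if p.1 = x ∧ p.2 = y then α else 0) * (G.dist p.1 p.2 : ℝ)).Finite := by
        apply Set.Finite.subset (Set.finite_singleton (x, y))
        intro p hp
        by_contra hne
        apply hp
        have : ¬ (p.1 = x ∧ p.2 = y) := fun h => hne (Prod.ext h.1 h.2)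
        simp [this]
      have hfin2 : (support fun p : V × V =>
          (1 - α) * (A0 p.1 p.2 * (G.dist p.1 p.2 : ℝ))).Finite := by
        apply Set.Finite.subset hA0.1
        intro p hp hz
        exact hp (by simp [hz])
      rw [hsplit, finsum_add_distrib hfin1 hfin2,
        ← mul_finsum' _ _ (show (support fun p : V × V =>
          A0 p.1 p.2 * (G.dist p.1 p.2 : ℝ)).Finite by
            apply Set.Finite.subset hA0.1
            intro p hp hz
            exact hp (by simp [hz])),
        ← hw0, finsum_eq_single _ (x, y) (fun p hp => by
          have : ¬ (p.1 = x ∧ p.2 = y) := fun h => hp (Prod.ext h.1 h.2)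
          simp [this])]
      simp [hd]
  have hbdd : BddBelow Sα := by
    refine ⟨0, ?_⟩
    rintro w ⟨A, hA, rfl⟩
    exact finsum_nonneg fun p => mul_nonneg (hA.2.1 p.1 p.2).1 (Nat.cast_nonneg _)
  obtain ⟨A0, hA0⟩ := exists_coupling G hxy
  have hne0 : S0.Nonempty := ⟨_, A0, hA0, rfl⟩
  have hle : ∀ w0 ∈ S0, sInf Sα ≤ α + (1 - α) * w0 := fun w0 hw0 => csInf_le hbdd (key w0 hw0)
  have h2 : (sInf Sα - α) / (1 - α) ≤ sInf S0 := by
    apply le_csInf hne0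
    intro w0 hw0
    rw [div_le_iff₀ hαpos]
    have := hle w0 hw0
    nlinarith
  rw [div_le_iff₀ hαpos] at h2
  simp only [transportDist, ← hS0, ← hSα]
  nlinarith

end Helpers

/-- For every edge `xy` of a simple connected graph,
`κ_LLY(x,y) ≥ κ_0(x,y) = 1 - W(m_x^0, m_y^0)`. -/
theorem curvature_ge_idleness_zero (G : SimpleGraph V) [G.LocallyFinite]
    (hconn : G.Connected) :
    ∀ x y : V, G.Adj x y → ∀ κ : ℝ, HasLLYCurv G x y κ →
      1 - transportDist G (lazyWalk G 0 x) (lazyWalk G 0 y) ≤ κ := by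
  intro x y hxy κ hκ
  set W0 := transportDist G (lazyWalk G 0 x) (lazyWalk G 0 y) with hW0
  have hd : (G.dist x y : ℝ) = 1 := by
    exact_mod_cast congrArg Nat.cast (SimpleGraph.dist_eq_one_iff_adj.mpr hxy)
  refine ge_of_tendsto hκ ?_
  have hmem : ∀ᶠ α : ℝ in nhdsWithin 1 (Set.Iio 1), 0 < α ∧ α < 1 :=
    (eventually_nhdsWithin_of_eventually_nhds (eventually_gt_nhds one_pos)).and
      eventually_mem_nhdsWithin
  filter_upwards [hmem] with α ⟨hα0, hα1⟩
  have hαpos : (0:ℝ) < 1 - α := by linarith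
  have hkey := transport_mix G hxy hα0.le hα1
  rw [alphaRicci, hd, div_one, le_div_iff₀ hαpos]
  nlinarith
end
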